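/- arXiv:1201.0847 — 5 statements merged into one kernel-verified Lean document; each statement's English description precedes it below -/
import Mathlib

section
/- Let Z be an M-iwau in a Banach space Y, witnessed by nets φ_i : Y → Z and ψ_i : Y → Y, and let Q : Y → Y/Z be the quotient map. Then ψ_i(z) → 0 for every z ∈ Z, and ‖Q(y)‖ = lim_i ‖ψ_i(y)‖ for every y ∈ Y. -/
open Filter Topology Metric Set

noncomputable section

/-- If `Z` is an M-ideal with an approximate unit in a Banach space `Y`,
witnessed by nets `φ i : Y → Z` and `ψ i : Y → Y`, and `Q : Y → Y ⧸ Z` is the quotient map,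
then `ψ i z → 0` for every `z ∈ Z` and `‖Q y‖ = lim_i ‖ψ i y‖` for every `y ∈ Y`. -/
theorem free_spaces_stmt1 {Y : Type*} [NormedAddCommGroup Y] [NormedSpace ℝ Y]
    [CompleteSpace Y] (Z : Submodule ℝ Y) (hZ : IsClosed (Z : Set Y))
    {ι : Type*} (l : Filter ι) [l.NeBot] (φ ψ : ι → Y →L[ℝ] Y)
    (hφZ : ∀ i y, φ i y ∈ Z)
    (hφ : ∀ z ∈ Z, Filter.Tendsto (fun i => φ i z) l (nhds z))
    (hψQ : ∀ i y, Z.mkQ (ψ i y) = Z.mkQ y)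
    (happrox : ∀ y, Filter.Tendsto (fun i => φ i y + ψ i y) l (nhds y))
    (hmax : ∀ i x y, ‖φ i x + ψ i y‖ ≤ max ‖x‖ ‖y‖) :
    (∀ z ∈ Z, Filter.Tendsto (fun i => ψ i z) l (nhds (0 : Y))) ∧
    ∀ y : Y, Filter.Tendsto (fun i => ‖ψ i y‖) l (nhds ‖Z.mkQ y‖) := by
  have hψ0 : ∀ z ∈ Z, Filter.Tendsto (fun i => ψ i z) l (nhds (0 : Y)) := by
    intro z hz
    have h := (happrox z).sub (hφ z hz)
    simpa using h
  refine ⟨hψ0, fun y => ?_⟩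
  -- ψ is a contraction (take x = 0 in hmax)
  have hcontr : ∀ i w, ‖ψ i w‖ ≤ ‖w‖ := by
    intro i w
    have := hmax i 0 w
    simpa using this
  -- lower bound: ‖Z.mkQ y‖ ≤ ‖ψ i y‖
  have hlow : ∀ i, ‖Z.mkQ y‖ ≤ ‖ψ i y‖ := by
    intro i
    calc ‖Z.mkQ y‖ = ‖Z.mkQ (ψ i y)‖ := by rw [hψQ]
      _ ≤ ‖ψ i y‖ := Submodule.Quotient.norm_mk_le _ _
  rw [Metric.tendsto_nhds]
  intro ε hε
  obtain ⟨m, hm, hmlt⟩ := Submodule.Quotient.norm_mk_lt (Z.mkQ y) (half_pos hε)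
  -- y - m ∈ Z
  have hymZ : y - m ∈ Z := by
    rw [← Submodule.Quotient.eq]
    exact hm.symm
  have hhalf : Filter.Tendsto (fun i => ψ i (y - m)) l (nhds (0 : Y)) :=
    hψ0 _ hymZ
  have hev : ∀ᶠ i in l, ‖ψ i (y - m)‖ < ε / 2 := by
    have hn := hhalf.norm
    rw [norm_zero] at hn
    exact hn.eventually_lt_const (half_pos hε)
  filter_upwards [hev] with i hi
  rw [Real.dist_eq, abs_lt]
  constructor
  · -- ‖ψ i y‖ - ‖Z.mkQ y‖ > -ε, i.e. upper bound on ‖ψ i y‖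
    have : ‖ψ i y‖ ≤ ‖ψ i m‖ + ‖ψ i (y - m)‖ := by
      have : (ψ i) y = ψ i m + ψ i (y - m) := by
        rw [← map_add]; congr 1; abel
      rw [this]; exact norm_add_le _ _
    have h1 : ‖ψ i m‖ ≤ ‖m‖ := hcontr i m
    linarith [hlow i]
  · have hy : ‖ψ i y‖ ≤ ‖ψ i m‖ + ‖ψ i (y - m)‖ := by
      have : (ψ i) y = ψ i m + ψ i (y - m) := by
        rw [← map_add]; congr 1; abel
      rw [this]; exact norm_add_le _ _
    have h1 : ‖ψ i m‖ ≤ ‖m‖ := hcontr i m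
    linarith

end
end

section
/- Let Y be a Banach space, let Z ⊂ Y be an M-ideal with an approximate unit, let Q : Y → Y/Z be the quotient map, and let M be a separable metric space. Then for every λ ≥ 1 the set { Q∘f : f ∈ Lip^λ(M,Y) } is a closed subset of Lip^λ(M, Y/Z) in the topology of pointwise convergence. -/
open Filter Topology Metric Set

noncomputable section

/-- A closed subspace `Z` of a Banach space `Y` is an M-ideal with an approximate unit
(M-iwau) if there are nets of operators `φ i : Y → Z` and `ψ i : Y → Y` such that
`φ i z → z` for every `z ∈ Z`, `Q ∘ ψ i = Q` for all `i` (where `Q : Y → Y ⧸ Z` is the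
quotient map, i.e. `ψ i y - y ∈ Z`), `φ i + ψ i → id` pointwise, and
`‖φ i x + ψ i y‖ ≤ max ‖x‖ ‖y‖` for all `x y i`. -/
def IsMIwau {Y : Type*} [NormedAddCommGroup Y] [NormedSpace ℝ Y]
    (Z : Submodule ℝ Y) : Prop :=
  IsClosed (Z : Set Y) ∧
    ∃ (ι : Type) (l : Filter ι), l.NeBot ∧
      ∃ φ ψ : ι → Y →L[ℝ] Y,
        (∀ i y, φ i y ∈ Z) ∧
        (∀ z ∈ Z, Filter.Tendsto (fun i => φ i z) l (nhds z)) ∧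
        (∀ i y, ψ i y - y ∈ Z) ∧
        (∀ y, Filter.Tendsto (fun i => φ i y + ψ i y) l (nhds y)) ∧
        (∀ i x y, ‖φ i x + ψ i y‖ ≤ max ‖x‖ ‖y‖)

/-- Gluing lemma for M-ideals with approximate units. -/
private lemma miwau_glue {Y : Type*} [NormedAddCommGroup Y] [NormedSpace ℝ Y]
    (Z : Submodule ℝ Y) {ι : Type} {l : Filter ι} (hl : l.NeBot)
    (φ ψ : ι → Y →L[ℝ] Y)
    (hφZ : ∀ i y, φ i y ∈ Z)
    (hφz : ∀ z ∈ Z, Filter.Tendsto (fun i => φ i z) l (nhds z))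
    (hψQ : ∀ i y, ψ i y - y ∈ Z)
    (hsum : ∀ y, Filter.Tendsto (fun i => φ i y + ψ i y) l (nhds y))
    (hmax : ∀ i x y, ‖φ i x + ψ i y‖ ≤ max ‖x‖ ‖y‖)
    {M : Type*} [MetricSpace M] (lam : NNReal)
    (f h : M → Y) (hf : LipschitzWith lam f) (hh : LipschitzWith lam h)
    (n : ℕ) (x : ℕ → M) {ρ ε : ℝ} (hρ : 0 < ρ) (hε : 0 < ε)
    (hclose : ∀ k < n, ‖Z.mkQ (f (x k)) - Z.mkQ (h (x k))‖ < ρ) :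
    ∃ f' : M → Y, LipschitzWith lam f' ∧ (∀ p, Z.mkQ (f' p) = Z.mkQ (h p)) ∧
      ∀ k < n, ‖f' (x k) - f (x k)‖ ≤ 2 * ρ + 2 * ε := by
  haveI := hl
  -- choose good approximations z k ∈ Z of f (x k) - h (x k)
  have hzchoice : ∀ k : ℕ, ∃ z, z ∈ Z ∧ (k < n → ‖(f (x k) - h (x k)) - z‖ < ρ) := by
    intro k
    by_cases hk : k < n
    · have hlt : ‖Z.mkQ (f (x k) - h (x k))‖ < ρ := by
        rw [map_sub]; exact hclose k hk
      obtain ⟨m, hm, hmn⟩ :=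
        Submodule.Quotient.norm_mk_lt (Z.mkQ (f (x k) - h (x k))) (sub_pos.mpr hlt)
      have hmem : (f (x k) - h (x k)) - m ∈ Z := by
        rw [← Submodule.Quotient.eq]
        exact hm.symm
      refine ⟨(f (x k) - h (x k)) - m, hmem, fun _ => ?_⟩
      have : f (x k) - h (x k) - ((f (x k) - h (x k)) - m) = m := by abel
      rw [this]
      linarith
    · exact ⟨0, Z.zero_mem, fun hk' => absurd hk' hk⟩
  choose z hzZ hzr using hzchoice
  have hev : ∀ᶠ i in l, ∀ k ∈ Finset.range n,
      ‖φ i (z k) - z k‖ < ε ∧ ‖(φ i (h (x k)) + ψ i (h (x k))) - h (x k)‖ < ε := by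
    rw [Filter.eventually_all_finset]
    intro k _
    have h1 := Metric.tendsto_nhds.mp (hφz (z k) (hzZ k)) ε hε
    have h2 := Metric.tendsto_nhds.mp (hsum (h (x k))) ε hε
    filter_upwards [h1, h2] with i hi1 hi2
    rw [dist_eq_norm] at hi1 hi2
    exact ⟨hi1, hi2⟩
  obtain ⟨i, hi⟩ := hev.exists
  have hφnorm : ∀ v : Y, ‖φ i v‖ ≤ ‖v‖ := by
    intro v
    have := hmax i v 0
    simpa [max_eq_left (norm_nonneg v)] using this
  refine ⟨fun p => φ i (f p) + ψ i (h p), ?_, ?_, ?_⟩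
  · apply LipschitzWith.of_dist_le_mul
    intro p q
    rw [dist_eq_norm]
    have hrw : (φ i (f p) + ψ i (h p)) - (φ i (f q) + ψ i (h q))
        = φ i (f p - f q) + ψ i (h p - h q) := by
      rw [map_sub, map_sub]; abel
    rw [hrw]
    refine (hmax i _ _).trans (max_le ?_ ?_)
    · rw [← dist_eq_norm]; exact hf.dist_le_mul p q
    · rw [← dist_eq_norm]; exact hh.dist_le_mul p q
  · intro p
    have h1 : Z.mkQ (φ i (f p)) = 0 := by
      rw [Submodule.mkQ_apply, Submodule.Quotient.mk_eq_zero]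
      exact hφZ i (f p)
    have h2 : Z.mkQ (ψ i (h p)) = Z.mkQ (h p) := by
      rw [Submodule.mkQ_apply, Submodule.mkQ_apply, Submodule.Quotient.eq]
      exact hψQ i (h p)
    rw [map_add, h1, h2, zero_add]
  · intro k hk
    have hiz := (hi k (Finset.mem_range.mpr hk)).1
    have his := (hi k (Finset.mem_range.mpr hk)).2
    have hrn : ‖(f (x k) - h (x k)) - z k‖ < ρ := hzr k hk
    set r := (f (x k) - h (x k)) - z k with hrdef
    have hdecomp : (φ i (f (x k)) + ψ i (h (x k))) - f (x k)
        = (φ i (z k) - z k) + (φ i r - r) + ((φ i (h (x k)) + ψ i (h (x k))) - h (x k)) := by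
      have hfx : f (x k) = z k + r + h (x k) := by rw [hrdef]; abel
      rw [hfx, map_add, map_add]
      abel
    rw [hdecomp]
    have hb2 : ‖φ i r - r‖ ≤ ‖r‖ + ‖r‖ := (norm_sub_le _ _).trans (by linarith [hφnorm r])
    calc ‖(φ i (z k) - z k) + (φ i r - r) + ((φ i (h (x k)) + ψ i (h (x k))) - h (x k))‖
        ≤ ‖φ i (z k) - z k‖ + ‖φ i r - r‖ + ‖(φ i (h (x k)) + ψ i (h (x k))) - h (x k)‖ :=
          norm_add₃_le
      _ ≤ 2 * ρ + 2 * ε := by linarith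

/-- Recursive construction with choice. -/
private def miwauIter {α : Type*} (P : ℕ → α → Prop) (Q : ℕ → α → α → Prop) (a0 : α)
    (h0 : P 0 a0) (hstep : ∀ n a, P n a → ∃ a', P (n + 1) a' ∧ Q n a a') :
    (n : ℕ) → {a : α // P n a}
  | 0 => ⟨a0, h0⟩
  | (n + 1) =>
    ⟨(hstep n (miwauIter P Q a0 h0 hstep n).1 (miwauIter P Q a0 h0 hstep n).2).choose,
      (hstep n (miwauIter P Q a0 h0 hstep n).1
        (miwauIter P Q a0 h0 hstep n).2).choose_spec.1⟩

private lemma miwauIter_spec {α : Type*} (P : ℕ → α → Prop) (Q : ℕ → α → α → Prop) (a0 : α)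
    (h0 : P 0 a0) (hstep : ∀ n a, P n a → ∃ a', P (n + 1) a' ∧ Q n a a') (n : ℕ) :
    Q n (miwauIter P Q a0 h0 hstep n).1 (miwauIter P Q a0 h0 hstep (n + 1)).1 :=
  (hstep n (miwauIter P Q a0 h0 hstep n).1 (miwauIter P Q a0 h0 hstep n).2).choose_spec.2


/-- If `Z ⊆ Y` is an M-ideal with an approximate unit and `M` is a
separable metric space, then for every `λ ≥ 1` the set `{Q ∘ f : f ∈ Lip^λ(M, Y)}` is
closed in `Lip^λ(M, Y ⧸ Z)` for the topology of pointwise convergence. -/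
theorem free_spaces_stmt4 {Y : Type*} [NormedAddCommGroup Y] [NormedSpace ℝ Y]
    [CompleteSpace Y] (Z : Submodule ℝ Y) (hZ : IsMIwau Z)
    {M : Type*} [MetricSpace M] [TopologicalSpace.SeparableSpace M]
    (lam : NNReal) (hlam : 1 ≤ lam) :
    IsClosed {g : {g : M → Y ⧸ Z // LipschitzWith lam g} |
      ∃ f : M → Y, LipschitzWith lam f ∧ ∀ x : M, Z.mkQ (f x) = g.val x} := by
  obtain ⟨hZc, ι, l, hl, φ, ψ, hφZ, hφz, hψQ, hsum, hmax⟩ := hZ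
  apply isClosed_of_closure_subset
  intro g hg
  rcases isEmpty_or_nonempty M with hM | hM
  · exact ⟨fun _ => 0, (LipschitzWith.const 0).weaken (show (0:NNReal) ≤ lam from zero_le ..),
      fun p => (hM.false p).elim⟩
  -- dense sequence
  set x : ℕ → M := TopologicalSpace.denseSeq M with hxdef
  have hx : DenseRange x := TopologicalSpace.denseRange_denseSeq M
  -- quotient norm is 1-Lipschitz
  have hmkle : ∀ w : Y, ‖Z.mkQ w‖ ≤ ‖w‖ := fun w => Submodule.Quotient.norm_mk_le Z w
  -- approximation from closure on finitely many points
  have happrox : ∀ (n : ℕ) (ε : ℝ), 0 < ε → ∃ h : M → Y, LipschitzWith lam h ∧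
      ∀ k < n, ‖Z.mkQ (h (x k)) - g.val (x k)‖ < ε := by
    intro n ε hε
    set V : Set (M → Y ⧸ Z) :=
      ⋂ k ∈ Finset.range n, (fun u : M → Y ⧸ Z => u (x k)) ⁻¹' Metric.ball (g.val (x k)) ε
      with hVdef
    have hVopen : IsOpen V :=
      isOpen_biInter_finset fun k _ => (continuous_apply (x k)).isOpen_preimage _ isOpen_ball
    have hgV : g ∈ Subtype.val ⁻¹' V := by
      simp only [hVdef, mem_preimage, mem_iInter, mem_ball]
      intro k _
      simpa using hε
    obtain ⟨g', hg'mem, hg'S⟩ :=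
      mem_closure_iff.mp hg _ (hVopen.preimage continuous_subtype_val) hgV
    obtain ⟨f0, hf0lip, hf0q⟩ := hg'S
    refine ⟨f0, hf0lip, fun k hk => ?_⟩
    have hball : g'.val (x k) ∈ Metric.ball (g.val (x k)) ε := by
      have := hg'mem
      simp only [hVdef, mem_preimage, mem_iInter] at this
      exact this k (Finset.mem_range.mpr hk)
    rw [hf0q (x k), ← dist_eq_norm]
    exact hball
  -- the inductive predicate
  set P : ℕ → (M → Y) → Prop := fun n f =>
    LipschitzWith lam f ∧ ∀ k < n, ‖Z.mkQ (f (x k)) - g.val (x k)‖ ≤ (1/2 : ℝ) ^ n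
    with hPdef
  set Q : ℕ → (M → Y) → (M → Y) → Prop := fun n f f' =>
    ∀ k < n, ‖f' (x k) - f (x k)‖ ≤ 6 * (1/2 : ℝ) ^ n with hQdef
  have hbase : P 0 (fun _ => 0) :=
    ⟨(LipschitzWith.const 0).weaken (show (0:NNReal) ≤ lam from zero_le ..), fun k hk => absurd hk (Nat.not_lt_zero k)⟩
  have hstep : ∀ n f, P n f → ∃ f', P (n + 1) f' ∧ Q n f f' := by
    intro n f hPf
    obtain ⟨h, hhlip, hhq⟩ := happrox (n + 1) ((1/2 : ℝ) ^ (n + 1)) (by positivity)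
    have hclose : ∀ k < n,
        ‖Z.mkQ (f (x k)) - Z.mkQ (h (x k))‖ < (1/2 : ℝ) ^ n + (1/2 : ℝ) ^ (n + 1) := by
      intro k hk
      have t1 := hPf.2 k hk
      have t2 := hhq k (hk.trans (Nat.lt_succ_self n))
      have htri : ‖Z.mkQ (f (x k)) - Z.mkQ (h (x k))‖
          ≤ ‖Z.mkQ (f (x k)) - g.val (x k)‖ + ‖Z.mkQ (h (x k)) - g.val (x k)‖ := by
        have := norm_sub_le (Z.mkQ (f (x k)) - g.val (x k)) (Z.mkQ (h (x k)) - g.val (x k))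
        have heq : (Z.mkQ (f (x k)) - g.val (x k)) - (Z.mkQ (h (x k)) - g.val (x k))
            = Z.mkQ (f (x k)) - Z.mkQ (h (x k)) := by abel
        rwa [heq] at this
      linarith
    obtain ⟨f', hf'lip, hf'q, hf'close⟩ := miwau_glue Z hl φ ψ hφZ hφz hψQ hsum hmax lam f h
      hPf.1 hhlip n x (by positivity) (show (0:ℝ) < (1/2 : ℝ) ^ (n + 1) by positivity) hclose
    refine ⟨f', ⟨hf'lip, fun k hk => ?_⟩, fun k hk => ?_⟩
    · rw [hf'q (x k)]
      exact (hhq k hk).le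
    · have hb := hf'close k hk
      have hp : (1/2 : ℝ) ^ (n + 1) = (1/2 : ℝ) ^ n / 2 := by ring
      rw [hp] at hb
      have hnn : (0:ℝ) ≤ (1/2 : ℝ) ^ n := by positivity
      linarith
  -- the recursively constructed sequence
  set F : (n : ℕ) → {f : M → Y // P n f} := miwauIter P Q (fun _ => 0) hbase hstep with hFdef
  have hB : ∀ n, ∀ k < n, ‖(F (n + 1)).1 (x k) - (F n).1 (x k)‖ ≤ 6 * (1/2 : ℝ) ^ n :=
    fun n => miwauIter_spec P Q (fun _ => 0) hbase hstep n
  -- Cauchy estimates on the dense sequence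
  have hCk : ∀ k m, k < m → ∀ n, m ≤ n →
      ‖(F n).1 (x k) - (F m).1 (x k)‖ ≤ 12 * ((1/2 : ℝ) ^ m - (1/2 : ℝ) ^ n) := by
    intro k m hkm n hmn
    induction n, hmn using Nat.le_induction with
    | base => simp
    | succ n hmn ih =>
      have h1 := hB n k (lt_of_lt_of_le hkm hmn)
      have htri : ‖(F (n + 1)).1 (x k) - (F m).1 (x k)‖
          ≤ ‖(F (n + 1)).1 (x k) - (F n).1 (x k)‖ + ‖(F n).1 (x k) - (F m).1 (x k)‖ := by
        have := norm_add_le ((F (n + 1)).1 (x k) - (F n).1 (x k))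
          ((F n).1 (x k) - (F m).1 (x k))
        have heq : ((F (n + 1)).1 (x k) - (F n).1 (x k)) + ((F n).1 (x k) - (F m).1 (x k))
            = (F (n + 1)).1 (x k) - (F m).1 (x k) := by abel
        rwa [heq] at this
      have hp : (1/2 : ℝ) ^ (n + 1) = (1/2 : ℝ) ^ n / 2 := by ring
      rw [hp]
      linarith
  -- pointwise Cauchy
  have hCauchy : ∀ p : M, CauchySeq fun n => (F n).1 p := by
    intro p
    rw [Metric.cauchySeq_iff']
    intro ε hε
    have hlam1 : (0:ℝ) < (lam : ℝ) + 1 := by positivity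
    obtain ⟨k, hk⟩ := Metric.denseRange_iff.mp hx p (ε / (4 * ((lam : ℝ) + 1)))
      (by positivity)
    obtain ⟨N0, hN0⟩ := exists_pow_lt_of_lt_one (show (0:ℝ) < ε / 48 by positivity)
      (show (1/2 : ℝ) < 1 by norm_num)
    refine ⟨max (k + 1) N0, fun n hn => ?_⟩
    set N := max (k + 1) N0 with hNdef
    have hkN : k < N := lt_of_lt_of_le (Nat.lt_succ_self k) (le_max_left _ _)
    have hkn : k < n := lt_of_lt_of_le hkN hn
    have hmid : dist ((F n).1 (x k)) ((F N).1 (x k)) ≤ 12 * (1/2 : ℝ) ^ N := by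
      rw [dist_eq_norm]
      have := hCk k N hkN n hn
      have hpos : (0:ℝ) ≤ (1/2 : ℝ) ^ n := by positivity
      linarith
    have hNle : (1/2 : ℝ) ^ N ≤ (1/2 : ℝ) ^ N0 :=
      pow_le_pow_of_le_one (by norm_num) (by norm_num) (le_max_right _ _)
    have hside : ∀ m : ℕ, dist ((F m).1 p) ((F m).1 (x k)) < ε / 4 := by
      intro m
      have hle := (F m).2.1.dist_le_mul p (x k)
      have : (lam : ℝ) * dist p (x k) ≤ ((lam : ℝ) + 1) * dist p (x k) := by
        have := dist_nonneg (x := p) (y := x k)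
        nlinarith
      have h2 : ((lam : ℝ) + 1) * dist p (x k) < ((lam : ℝ) + 1) * (ε / (4 * ((lam : ℝ) + 1))) :=
        mul_lt_mul_of_pos_left hk hlam1
      have h3 : ((lam : ℝ) + 1) * (ε / (4 * ((lam : ℝ) + 1))) = ε / 4 := by
        field_simp
      calc dist ((F m).1 p) ((F m).1 (x k)) ≤ (lam : ℝ) * dist p (x k) := hle
        _ < ε / 4 := by linarith
    calc dist ((F n).1 p) ((F N).1 p)
        ≤ dist ((F n).1 p) ((F n).1 (x k)) + dist ((F n).1 (x k)) ((F N).1 (x k))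
          + dist ((F N).1 (x k)) ((F N).1 p) := dist_triangle4 _ _ _ _
      _ < ε / 4 + 12 * (1/2 : ℝ) ^ N + ε / 4 := by
          have := hside n
          have h2 := hside N
          rw [dist_comm ((F N).1 (x k)) ((F N).1 p)]
          linarith
      _ < ε := by
          have : 12 * (1/2 : ℝ) ^ N ≤ 12 * (1/2 : ℝ) ^ N0 := by linarith
          linarith
  have hconv : ∀ p : M, ∃ y : Y, Tendsto (fun n => (F n).1 p) atTop (nhds y) :=
    fun p => cauchySeq_tendsto_of_complete (hCauchy p)
  choose f hf using hconv
  have hfLip : LipschitzWith lam f := by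
    apply LipschitzWith.of_dist_le_mul
    intro p q
    exact le_of_tendsto ((hf p).dist (hf q))
      (Filter.Eventually.of_forall fun n => (F n).2.1.dist_le_mul p q)
  refine ⟨f, hfLip, ?_⟩
  -- the norm of the defect is 0
  have key : ∀ p : M, ‖Z.mkQ (f p) - g.val p‖ = 0 := by
    intro p
    by_contra hne
    have hpos : 0 < ‖Z.mkQ (f p) - g.val p‖ := (norm_nonneg _).lt_of_ne (Ne.symm hne)
    set ε := ‖Z.mkQ (f p) - g.val p‖ with hεdef
    have hlam1 : (0:ℝ) < (lam : ℝ) + 1 := by positivity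
    obtain ⟨k, hk⟩ := Metric.denseRange_iff.mp hx p (ε / (8 * ((lam : ℝ) + 1)))
      (by positivity)
    have e1 : ∀ᶠ n in atTop, k < n := eventually_gt_atTop k
    have e2 : ∀ᶠ n in atTop, (1/2 : ℝ) ^ n < ε / 4 := by
      have ht : Tendsto (fun n : ℕ => (1/2 : ℝ) ^ n) atTop (nhds 0) :=
        tendsto_pow_atTop_nhds_zero_of_lt_one (by norm_num) (by norm_num)
      exact ht.eventually_lt_const (by positivity)
    have e3 : ∀ᶠ n in atTop, dist ((F n).1 (x k)) (f (x k)) < ε / 4 :=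
      Metric.tendsto_nhds.mp (hf (x k)) (ε / 4) (by positivity)
    obtain ⟨n, hkn, hpow, hdist⟩ := (e1.and (e2.and e3)).exists
    -- the four-term chain
    have c1 : dist (Z.mkQ (f p)) (Z.mkQ (f (x k))) ≤ (lam : ℝ) * dist p (x k) := by
      rw [dist_eq_norm, ← map_sub]
      exact (hmkle _).trans (by rw [← dist_eq_norm]; exact hfLip.dist_le_mul p (x k))
    have c2 : dist (Z.mkQ (f (x k))) (Z.mkQ ((F n).1 (x k))) < ε / 4 := by
      rw [dist_eq_norm, ← map_sub]
      refine lt_of_le_of_lt (hmkle _) ?_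
      rw [← dist_eq_norm, dist_comm]
      exact hdist
    have c3 : dist (Z.mkQ ((F n).1 (x k))) (g.val (x k)) < ε / 4 := by
      rw [dist_eq_norm]
      exact lt_of_le_of_lt ((F n).2.2 k hkn) hpow
    have c4 : dist (g.val (x k)) (g.val p) ≤ (lam : ℝ) * dist (x k) p :=
      g.2.dist_le_mul (x k) p
    have hside : (lam : ℝ) * dist p (x k) < ε / 8 := by
      have h1 : (lam : ℝ) * dist p (x k) ≤ ((lam : ℝ) + 1) * dist p (x k) := by
        have := dist_nonneg (x := p) (y := x k)
        nlinarith
      have h2 : ((lam : ℝ) + 1) * dist p (x k) < ((lam : ℝ) + 1) * (ε / (8 * ((lam : ℝ) + 1))) :=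
        mul_lt_mul_of_pos_left hk hlam1
      have h3 : ((lam : ℝ) + 1) * (ε / (8 * ((lam : ℝ) + 1))) = ε / 8 := by
        field_simp
      linarith
    have htri : dist (Z.mkQ (f p)) (g.val p)
        ≤ dist (Z.mkQ (f p)) (Z.mkQ (f (x k))) + dist (Z.mkQ (f (x k))) (Z.mkQ ((F n).1 (x k)))
          + dist (Z.mkQ ((F n).1 (x k))) (g.val (x k)) + dist (g.val (x k)) (g.val p) := by
      have t1 := dist_triangle4 (Z.mkQ (f p)) (Z.mkQ (f (x k))) (Z.mkQ ((F n).1 (x k)))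
        (g.val (x k))
      have t2 := dist_triangle (Z.mkQ (f p)) (g.val (x k)) (g.val p)
      linarith
    have hεdist : dist (Z.mkQ (f p)) (g.val p) = ε := by rw [dist_eq_norm]
    rw [hεdist] at htri
    have : dist (g.val (x k)) (g.val p) < ε / 8 := by
      rw [dist_comm p (x k)] at hside
      linarith
    linarith
  -- conclude exact equality using closedness of Z
  intro p
  obtain ⟨w, hw⟩ := Submodule.Quotient.mk_surjective Z (g.val p)
  have hw' : Z.mkQ w = g.val p := hw
  have hzero : ‖Z.mkQ (f p - w)‖ = 0 := by
    rw [map_sub, hw']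
    exact key p
  have hmem : f p - w ∈ Z := by
    have hclos : f p - w ∈ closure (Z : Set Y) := by
      rw [Metric.mem_closure_iff]
      intro ε hε
      obtain ⟨m, hm, hmn⟩ := Submodule.Quotient.norm_mk_lt (Z.mkQ (f p - w)) hε
      rw [hzero, zero_add] at hmn
      refine ⟨(f p - w) - m, ?_, ?_⟩
      · show (f p - w) - m ∈ Z
        rw [← Submodule.Quotient.eq]
        exact hm.symm
      · rw [dist_eq_norm]
        have : (f p - w) - ((f p - w) - m) = m := by abel
        rw [this]
        exact hmn
    rwa [hZc.closure_eq] at hclos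
  have : Z.mkQ (f p - w) = 0 := by
    rw [Submodule.mkQ_apply, Submodule.Quotient.mk_eq_zero]
    exact hmem
  rw [map_sub, hw', sub_eq_zero] at this
  exact this


end
end

section
/- If f is a Gâteaux-differentiable real-valued Lipschitz function on X vanishing at 0, then in the setting of Theorem 4 one has, for every x in the span of the x_i, R(x)(f) = ∫_H ⟨∇f(Σ_j t_j x_j), x⟩ dλ(t), where ∇f denotes the Gâteaux derivative of f; consequently |R(x)(f)| ≤ ‖x‖·‖f‖_L. -/
open Filter Topology Metric Set

noncomputable section

/-- `IsCubeMeasure μ` says that `μ` is the product of the Lebesgue measures on the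
factors of the Hilbert cube `H = [0,1]^ℕ`, viewed as a probability measure on `ℕ → ℝ`
carried by the cube: it is characterized by its values on cylinder sets. -/
def IsCubeMeasure (μ : MeasureTheory.Measure (ℕ → ℝ)) : Prop :=
  MeasureTheory.IsProbabilityMeasure μ ∧
    ∀ (s : Finset ℕ) (a b : ℕ → ℝ), (∀ i ∈ s, 0 ≤ a i ∧ b i ≤ 1) →
      μ {t | (∀ i : ℕ, t i ∈ Set.Icc (0:ℝ) 1) ∧ ∀ i ∈ s, t i ∈ Set.Icc (a i) (b i)}
        = ∏ i ∈ s, ENNReal.ofReal (b i - a i)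

open MeasureTheory

section DerivAux
variable {X : Type*} [NormedAddCommGroup X] [NormedSpace ℝ X]



lemma slope_tendsto {f : X → ℝ} {Df : X → X →L[ℝ] ℝ}
    (hDf : ∀ (y v : X), HasDerivAt (fun s : ℝ => f (y + s • v)) (Df y v) 0) (y v : X) :
    Tendsto (fun k : ℕ => ((k:ℝ)+1) * (f (y + ((k:ℝ)+1)⁻¹ • v) - f y)) atTop (𝓝 (Df y v)) := by
  have h := (hasDerivAt_iff_tendsto_slope.1 (hDf y v))
  have hseq : Tendsto (fun k : ℕ => ((k:ℝ)+1)⁻¹) atTop (𝓝[≠] (0:ℝ)) := by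
    apply tendsto_nhdsWithin_of_tendsto_nhds_of_eventually_within
    · simpa [one_div] using tendsto_one_div_add_atTop_nhds_zero_nat (𝕜 := ℝ)
    · filter_upwards with k
      simp [Nat.cast_add_one_ne_zero]
  have := h.comp hseq
  convert this using 2 with k
  simp [slope_def_field, div_eq_inv_mul, zero_smul]

lemma norm_Df_le {f : X → ℝ} {L : NNReal} (hfL : LipschitzWith L f) {Df : X → X →L[ℝ] ℝ}
    (hDf : ∀ (y v : X), HasDerivAt (fun s : ℝ => f (y + s • v)) (Df y v) 0) (y v : X) :
    |Df y v| ≤ L * ‖v‖ := by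
  have ht := (slope_tendsto hDf y v).abs
  refine le_of_tendsto ht ?_
  filter_upwards with k
  have hk : (0:ℝ) < (k:ℝ)+1 := by positivity
  have := hfL.dist_le_mul (y + ((k:ℝ)+1)⁻¹ • v) y
  rw [Real.dist_eq] at this
  have hd : dist (y + ((k:ℝ)+1)⁻¹ • v) y = ((k:ℝ)+1)⁻¹ * ‖v‖ := by
    rw [dist_eq_norm]
    simp [norm_smul, abs_of_pos, hk, inv_nonneg.2 hk.le, abs_of_nonneg]
  rw [hd] at this
  rw [abs_mul, abs_of_pos hk]
  calc ((k:ℝ)+1) * |f (y + ((k:ℝ)+1)⁻¹ • v) - f y| ≤ ((k:ℝ)+1) * ((L:ℝ) * (((k:ℝ)+1)⁻¹ * ‖v‖)) := by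
        exact mul_le_mul_of_nonneg_left this hk.le
    _ = L * ‖v‖ := by field_simp

lemma meas_Df {f : X → ℝ} {L : NNReal} (hfL : LipschitzWith L f) {Df : X → X →L[ℝ] ℝ}
    [MeasurableSpace X] [BorelSpace X]
    (hDf : ∀ (y v : X), HasDerivAt (fun s : ℝ => f (y + s • v)) (Df y v) 0) (v : X) :
    Measurable (fun y => Df y v) := by
  apply measurable_of_tendsto_metrizable
    (f := fun k : ℕ => fun y => ((k:ℝ)+1) * (f (y + ((k:ℝ)+1)⁻¹ • v) - f y))
  · intro k
    apply Measurable.const_mul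
    exact ((hfL.continuous.comp (continuous_id.add continuous_const)).sub
      hfL.continuous).measurable
  · exact tendsto_pi_nhds.2 fun y => slope_tendsto hDf y v

lemma ftc_aux {f : X → ℝ} {L : NNReal} (hfL : LipschitzWith L f) {Df : X → X →L[ℝ] ℝ}
    (hDf : ∀ (y v : X), HasDerivAt (fun s : ℝ => f (y + s • v)) (Df y v) 0) (y v : X) :
    f (y + v) - f y = ∫ s in (0:ℝ)..1, Df (y + s • v) v := by
  letI : MeasurableSpace X := borel X
  haveI : BorelSpace X := ⟨rfl⟩
  have hderiv : ∀ s ∈ Set.uIcc (0:ℝ) 1,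
      HasDerivAt (fun s : ℝ => f (y + s • v)) (Df (y + s • v) v) s := by
    intro s _
    have h0 := hDf (y + s • v) v
    have : (fun u : ℝ => f (y + u • v)) = (fun u : ℝ => f (y + s • v + u • v)) ∘ (fun u => u - s) := by
      funext u
      simp only [Function.comp_apply]
      congr 1
      rw [sub_smul]
      abel
    rw [this]
    simpa using HasDerivAt.comp s (by simpa using h0) ((hasDerivAt_id s).sub_const s)
  have hint : IntervalIntegrable (fun s : ℝ => Df (y + s • v) v) MeasureTheory.volume 0 1 := by
    have hm : Measurable fun s : ℝ => Df (y + s • v) v :=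
      (meas_Df hfL hDf v).comp (by fun_prop : Measurable fun s : ℝ => y + s • v)
    rw [intervalIntegrable_iff]
    haveI : IsFiniteMeasure (MeasureTheory.volume.restrict (Set.uIoc (0:ℝ) 1)) := by
      constructor
      rw [MeasureTheory.Measure.restrict_apply MeasurableSet.univ, Set.univ_inter]
      rw [Set.uIoc_of_le zero_le_one]; exact measure_Ioc_lt_top
    apply MeasureTheory.Integrable.mono' (MeasureTheory.integrable_const ((L:ℝ) * ‖v‖))
    · exact hm.aestronglyMeasurable.restrict
    · filter_upwards with s
      simpa using norm_Df_le hfL hDf (y + s • v) v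
  have := intervalIntegral.integral_eq_sub_of_hasDerivAt hderiv hint
  rw [this]
  simp

end DerivAux

section Aux
variable {X : Type*} [NormedAddCommGroup X] [NormedSpace ℝ X] [CompleteSpace X]

lemma summable_coeff {x : ℕ → X} (hxnorm : ∀ i, ‖x i‖ = (1/2:ℝ)^(i+1)) {t : ℕ → ℝ} {C : ℝ}
    (hC : ∀ j, |t j| ≤ C) : Summable (fun j => t j • x j) := by
  have hC0 : 0 ≤ C := le_trans (abs_nonneg _) (hC 0)
  apply Summable.of_norm_bounded (g := fun j => (C * (1/2)) * (1/2:ℝ)^j)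
  · exact (summable_geometric_of_lt_one (by norm_num) (by norm_num)).mul_left _
  · intro j
    rw [norm_smul, hxnorm j, pow_succ]
    calc ‖t j‖ * ((1/2:ℝ)^j * (1/2)) ≤ C * ((1/2:ℝ)^j * (1/2)) := by
          apply mul_le_mul_of_nonneg_right (hC j); positivity
      _ = (C * (1/2)) * (1/2:ℝ)^j := by ring

lemma tsum_update {x : ℕ → X} (hxnorm : ∀ i, ‖x i‖ = (1/2:ℝ)^(i+1)) {t : ℕ → ℝ}
    (ht : ∀ i, t i ∈ Icc (0:ℝ) 1) (n : ℕ) (r : ℝ) :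
    (∑' j, Function.update t n r j • x j)
      = (∑' j : ℕ, (if j = n then (0:ℝ) else t j) • x j) + r • x n := by
  classical
  have hu : Summable (fun j => (if j = n then (0:ℝ) else t j) • x j) := by
    apply summable_coeff hxnorm (C := 1)
    intro j
    by_cases hj : j = n
    · simp [hj]
    · rw [if_neg hj]
      exact abs_le.2 ⟨by linarith [(ht j).1], (ht j).2⟩
  have hv : HasSum (fun j => if j = n then r • x n else (0:X)) (r • x n) := hasSum_ite_eq n _
  have h3 := hu.hasSum.add hv
  have hfe : (fun j => Function.update t n r j • x j)
      = fun j => (if j = n then (0:ℝ) else t j) • x j + (if j = n then r • x n else (0:X)) := by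
    funext j
    by_cases hj : j = n
    · subst hj; simp [Function.update_apply]
    · simp [Function.update_apply, hj]
  rw [hfe]
  exact h3.tsum_eq
end Aux


namespace Stmt9

def cube : Set (ℕ → ℝ) := {t | ∀ i, t i ∈ Icc (0:ℝ) 1}

def cyl (s : Finset ℕ) (a b : ℕ → ℝ) : Set (ℕ → ℝ) := {t | ∀ i ∈ s, t i ∈ Icc (a i) (b i)}

lemma measurableSet_cyl (s : Finset ℕ) (a b : ℕ → ℝ) : MeasurableSet (cyl s a b) := by
  have : cyl s a b = ⋂ i ∈ s, (fun t : ℕ → ℝ => t i) ⁻¹' Icc (a i) (b i) := by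
    ext t; simp [cyl]
  rw [this]
  exact MeasurableSet.biInter s.countable_toSet
    (fun i _ => (measurable_pi_apply i) measurableSet_Icc)

lemma measurableSet_cube : MeasurableSet cube := by
  have : cube = ⋂ i, (fun t : ℕ → ℝ => t i) ⁻¹' Icc (0:ℝ) 1 := by ext t; simp [cube]
  rw [this]
  exact MeasurableSet.iInter (fun i => (measurable_pi_apply i) measurableSet_Icc)

variable {μ : MeasureTheory.Measure (ℕ → ℝ)}

lemma cube_full (hμ : IsCubeMeasure μ) : μ cube = 1 := by
  have := hμ.2 ∅ 0 1 (by simp)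
  simpa [cube] using this

lemma compl_cube_null (hμ : IsCubeMeasure μ) : μ cubeᶜ = 0 := by
  haveI := hμ.1
  have h1 := cube_full hμ
  have := measure_compl measurableSet_cube (by rw [h1]; exact ENNReal.one_ne_top)
  rw [this, h1, measure_univ, tsub_self]

lemma ae_mem_cube (hμ : IsCubeMeasure μ) : ∀ᵐ t ∂μ, t ∈ cube := by
  rw [MeasureTheory.ae_iff]
  exact compl_cube_null hμ

lemma mu_cyl (hμ : IsCubeMeasure μ) (s : Finset ℕ) (a b : ℕ → ℝ) :
    μ (cyl s a b) = ∏ i ∈ s, ENNReal.ofReal (min (b i) 1 - max (a i) 0) := by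
  haveI := hμ.1
  set a' : ℕ → ℝ := fun i => max (a i) 0 with ha'
  set b' : ℕ → ℝ := fun i => min (b i) 1 with hb'
  have hint : cyl s a b ∩ cube = cyl s a' b' ∩ cube := by
    ext t
    simp only [cyl, cube, mem_inter_iff, mem_setOf_eq, mem_Icc]
    constructor
    · rintro ⟨h1, h2⟩
      exact ⟨fun i hi => ⟨max_le (h1 i hi).1 (h2 i).1, le_min (h1 i hi).2 (h2 i).2⟩, h2⟩
    · rintro ⟨h1, h2⟩
      refine ⟨fun i hi => ⟨le_trans (le_max_left _ _) (h1 i hi).1,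
        le_trans (h1 i hi).2 (min_le_left _ _)⟩, h2⟩
  have heq : μ (cyl s a b) = μ (cyl s a b ∩ cube) := by
    apply le_antisymm
    · calc μ (cyl s a b) ≤ μ ((cyl s a b ∩ cube) ∪ cubeᶜ) := by
            apply measure_mono; intro t ht
            by_cases h : t ∈ cube
            · exact Or.inl ⟨ht, h⟩
            · exact Or.inr h
        _ ≤ μ (cyl s a b ∩ cube) + μ cubeᶜ := measure_union_le _ _
        _ = μ (cyl s a b ∩ cube) := by rw [compl_cube_null hμ, add_zero]
    · exact measure_mono inter_subset_left
  have hμ' := hμ.2 s a' b' (fun i _ => ⟨le_max_right _ _, min_le_right _ _⟩)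
  have hset : {t : ℕ → ℝ | (∀ i : ℕ, t i ∈ Set.Icc (0:ℝ) 1) ∧ ∀ i ∈ s, t i ∈ Set.Icc (a' i) (b' i)}
      = cyl s a' b' ∩ cube := by
    ext t; simp [cyl, cube, and_comm]
  rw [heq, hint, ← hset, hμ']

def P : Set (Set (ℕ → ℝ)) := {C | ∃ (s : Finset ℕ) (a b : ℕ → ℝ), C = cyl s a b}

lemma isPiSystem_P : IsPiSystem P := by
  rintro _ ⟨s₁, a₁, b₁, rfl⟩ _ ⟨s₂, a₂, b₂, rfl⟩ -
  classical
  refine ⟨s₁ ∪ s₂, fun i => if i ∈ s₁ then (if i ∈ s₂ then max (a₁ i) (a₂ i) else a₁ i) else a₂ i,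
    fun i => if i ∈ s₁ then (if i ∈ s₂ then min (b₁ i) (b₂ i) else b₁ i) else b₂ i, ?_⟩
  ext t
  simp only [cyl, mem_inter_iff, mem_setOf_eq, Finset.mem_union, mem_Icc]
  constructor
  · rintro ⟨h1, h2⟩ i hi
    by_cases hi1 : i ∈ s₁ <;> by_cases hi2 : i ∈ s₂ <;>
      simp only [hi1, hi2, if_true, if_false] <;>
      first
        | exact ⟨max_le (h1 i hi1).1 (h2 i hi2).1, le_min (h1 i hi1).2 (h2 i hi2).2⟩
        | exact h1 i hi1
        | exact h2 i hi2
        | (cases hi with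
            | inl h => exact absurd h hi1
            | inr h => exact absurd h hi2)
  · intro h
    constructor
    · intro i hi1
      have := h i (Or.inl hi1)
      by_cases hi2 : i ∈ s₂ <;> simp only [hi1, hi2, if_true, if_false] at this
      · exact ⟨le_trans (le_max_left _ _) this.1, le_trans this.2 (min_le_left _ _)⟩
      · exact this
    · intro i hi2
      have := h i (Or.inr hi2)
      by_cases hi1 : i ∈ s₁ <;> simp only [hi1, hi2, if_true, if_false] at this
      · exact ⟨le_trans (le_max_right _ _) this.1, le_trans this.2 (min_le_right _ _)⟩
      · exact this

lemma generateFrom_P : (inferInstance : MeasurableSpace (ℕ → ℝ)) = MeasurableSpace.generateFrom P := by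
  apply le_antisymm
  · rw [show (inferInstance : MeasurableSpace (ℕ → ℝ)) = MeasurableSpace.pi from rfl,
      MeasurableSpace.pi]
    refine iSup_le fun i => ?_
    rw [← measurable_iff_comap_le]
    apply measurable_of_Iic (mδ := MeasurableSpace.generateFrom P)
    intro x
    have hrw : (fun t : ℕ → ℝ => t i) ⁻¹' Iic x
        = ⋃ k : ℕ, cyl {i} (fun _ => -(k:ℝ)) (fun _ => x) := by
      ext t
      simp only [mem_preimage, mem_Iic, mem_iUnion, cyl, Finset.mem_singleton, mem_setOf_eq,
        mem_Icc]
      constructor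
      · intro h
        obtain ⟨k, hk⟩ := exists_nat_ge (-(t i))
        exact ⟨k, fun j hj => by subst hj; exact ⟨by linarith, h⟩⟩
      · rintro ⟨k, hk⟩
        exact (hk i rfl).2
    rw [hrw]
    exact MeasurableSet.iUnion fun k =>
      MeasurableSpace.measurableSet_generateFrom ⟨{i}, _, _, rfl⟩
  · refine MeasurableSpace.generateFrom_le ?_
    rintro _ ⟨s, a, b, rfl⟩
    exact measurableSet_cyl s a b

lemma measurable_upd (n : ℕ) :
    Measurable (fun p : (ℕ → ℝ) × ℝ => Function.update p.1 n p.2) := by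
  rw [measurable_pi_iff]
  intro i
  by_cases h : i = n
  · subst h
    simpa [Function.update_apply] using measurable_snd
  · simp only [Function.update_apply, h, if_false]
    exact (measurable_pi_apply i).comp measurable_fst

lemma map_update (hμ : IsCubeMeasure μ) (n : ℕ) :
    Measure.map (fun p : (ℕ → ℝ) × ℝ => Function.update p.1 n p.2)
      (μ.prod (volume.restrict (Icc (0:ℝ) 1))) = μ := by
  classical
  haveI := hμ.1
  haveI : IsProbabilityMeasure (volume.restrict (Icc (0:ℝ) 1)) := by
    constructor
    rw [Measure.restrict_apply MeasurableSet.univ, univ_inter, Real.volume_Icc]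
    simp
  set ν := Measure.map (fun p : (ℕ → ℝ) × ℝ => Function.update p.1 n p.2)
      (μ.prod (volume.restrict (Icc (0:ℝ) 1))) with hν
  haveI : IsProbabilityMeasure ν := Measure.isProbabilityMeasure_map (measurable_upd n).aemeasurable
  refine MeasureTheory.ext_of_generate_finite P generateFrom_P isPiSystem_P ?_ ?_
  · rintro _ ⟨s, a, b, rfl⟩
    rw [hν, Measure.map_apply (measurable_upd n) (measurableSet_cyl s a b)]
    by_cases hn : n ∈ s
    · have hpre : (fun p : (ℕ → ℝ) × ℝ => Function.update p.1 n p.2) ⁻¹' cyl s a b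
          = (cyl (s.erase n) a b) ×ˢ (Icc (a n) (b n)) := by
        ext ⟨t, r⟩
        simp only [mem_preimage, cyl, mem_setOf_eq, mem_prod, Finset.mem_erase,
          Function.update_apply]
        constructor
        · intro h
          refine ⟨fun i hi => ?_, ?_⟩
          · have := h i hi.2
            rwa [if_neg hi.1] at this
          · have := h n hn
            rwa [if_pos rfl] at this
        · rintro ⟨h1, h2⟩ i hi
          by_cases hin : i = n
          · subst hin; rwa [if_pos rfl]
          · rw [if_neg hin]; exact h1 i ⟨hin, hi⟩
      rw [hpre, Measure.prod_prod, mu_cyl hμ, Measure.restrict_apply measurableSet_Icc,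
        Icc_inter_Icc, Real.volume_Icc]
      rw [mu_cyl hμ]
      exact Finset.prod_erase_mul s _ hn
    · have hpre : (fun p : (ℕ → ℝ) × ℝ => Function.update p.1 n p.2) ⁻¹' cyl s a b
          = (cyl s a b) ×ˢ (univ : Set ℝ) := by
        ext ⟨t, r⟩
        simp only [mem_preimage, cyl, mem_setOf_eq, mem_prod, mem_univ, and_true,
          Function.update_apply]
        constructor
        · intro h i hi
          have := h i hi
          rwa [if_neg (fun he : i = n => hn (he ▸ hi))] at this
        · intro h i hi
          rw [if_neg (fun he : i = n => hn (he ▸ hi))]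
          exact h i hi
      rw [hpre, Measure.prod_prod, measure_univ, mul_one]
  · simp [measure_univ]

lemma integral_resample (hμ : IsCubeMeasure μ) (n : ℕ) (h : (ℕ → ℝ) → ℝ)
    (hm : AEStronglyMeasurable h μ) (C : ℝ) (hb : ∀ t, |h t| ≤ C) :
    ∫ t, h t ∂μ
      = ∫ t, (∫ r in Icc (0:ℝ) 1, h (Function.update t n r)) ∂μ := by
  haveI := hμ.1
  haveI : IsProbabilityMeasure (volume.restrict (Icc (0:ℝ) 1)) := by
    constructor
    rw [Measure.restrict_apply MeasurableSet.univ, univ_inter, Real.volume_Icc]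
    simp
  have hm' : AEStronglyMeasurable h
      (Measure.map (fun p : (ℕ → ℝ) × ℝ => Function.update p.1 n p.2)
        (μ.prod (volume.restrict (Icc (0:ℝ) 1)))) := by
    rw [map_update hμ n]; exact hm
  have haesm : AEStronglyMeasurable (fun p : (ℕ → ℝ) × ℝ => h (Function.update p.1 n p.2))
      (μ.prod (volume.restrict (Icc (0:ℝ) 1))) :=
    hm'.comp_aemeasurable (measurable_upd n).aemeasurable
  have hint : Integrable (fun p : (ℕ → ℝ) × ℝ => h (Function.update p.1 n p.2))
      (μ.prod (volume.restrict (Icc (0:ℝ) 1))) := by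
    apply Integrable.mono' (integrable_const C) haesm
    filter_upwards with p
    simpa using hb _
  calc ∫ t, h t ∂μ
      = ∫ t, h t ∂(Measure.map (fun p : (ℕ → ℝ) × ℝ => Function.update p.1 n p.2)
          (μ.prod (volume.restrict (Icc (0:ℝ) 1)))) := by rw [map_update hμ n]
    _ = ∫ p, h (Function.update p.1 n p.2) ∂(μ.prod (volume.restrict (Icc (0:ℝ) 1))) :=
        integral_map (measurable_upd n).aemeasurable hm'
    _ = ∫ t, (∫ r in Icc (0:ℝ) 1, h (Function.update t n r)) ∂μ := integral_prod _ hint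

end Stmt9

/-- In the setting of Theorem 4, if `f` is a Gâteaux-differentiable
real-valued Lipschitz function on `X` vanishing at `0`, with Gâteaux derivative `Df`,
then for every `x = ∑_{n ∈ s} c n • x n` in the span of the `x i` one has
`R(x)(f) = ∫_H ⟨Df(∑ j, t j • x j), x⟩ dλ(t)`, and consequently
`|R(x)(f)| ≤ ‖x‖ * ‖f‖_L`. -/
theorem free_spaces_stmt9 {X : Type*} [NormedAddCommGroup X] [NormedSpace ℝ X]
    [CompleteSpace X] [TopologicalSpace.SeparableSpace X]
    (x : ℕ → X) (hxli : LinearIndependent ℝ x)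
    (hxnorm : ∀ i, ‖x i‖ = (1/2 : ℝ) ^ (i + 1))
    (μ : MeasureTheory.Measure (ℕ → ℝ)) (hμ : IsCubeMeasure μ)
    (f : X → ℝ) (hf0 : f 0 = 0) (L : NNReal) (hfL : LipschitzWith L f)
    (Df : X → X →L[ℝ] ℝ)
    (hDf : ∀ (y v : X), HasDerivAt (fun s : ℝ => f (y + s • v)) (Df y v) 0) :
    ∀ (s : Finset ℕ) (c : ℕ → ℝ),
      (∑ n ∈ s, c n *
          ∫ t : ℕ → ℝ,
            (f (x n + ∑' j : ℕ, (if j = n then (0 : ℝ) else t j) • x j)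
              - f (∑' j : ℕ, (if j = n then (0 : ℝ) else t j) • x j)) ∂μ)
        = ∫ t : ℕ → ℝ, Df (∑' j : ℕ, t j • x j) (∑ n ∈ s, c n • x n) ∂μ ∧
      |∑ n ∈ s, c n *
          ∫ t : ℕ → ℝ,
            (f (x n + ∑' j : ℕ, (if j = n then (0 : ℝ) else t j) • x j)
              - f (∑' j : ℕ, (if j = n then (0 : ℝ) else t j) • x j)) ∂μ|
        ≤ ‖∑ n ∈ s, c n • x n‖ * L := by
  classical
  letI : MeasurableSpace X := borel X
  haveI : BorelSpace X := ⟨rfl⟩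
  haveI : SecondCountableTopology X := UniformSpace.secondCountable_of_separable X
  haveI := hμ.1
  intro s c
  have hgm : AEStronglyMeasurable (fun t : ℕ → ℝ => ∑' j : ℕ, t j • x j) μ := by
    apply aestronglyMeasurable_of_tendsto_ae atTop
      (f := fun N : ℕ => fun t : ℕ → ℝ => ∑ j ∈ Finset.range N, t j • x j)
    · intro N
      exact (continuous_finset_sum _ fun j _ =>
        (continuous_apply j).smul continuous_const).aestronglyMeasurable
    · filter_upwards [Stmt9.ae_mem_cube hμ] with t ht
      exact (summable_coeff hxnorm
        (fun j => abs_le.2 ⟨by linarith [(ht j).1], (ht j).2⟩)).hasSum.tendsto_sum_nat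
  have hDm : ∀ w : X, AEStronglyMeasurable (fun t : ℕ → ℝ => Df (∑' j : ℕ, t j • x j) w) μ :=
    fun w => ((meas_Df hfL hDf w).comp_aemeasurable hgm.aemeasurable).aestronglyMeasurable
  have hInt : ∀ w : X, Integrable (fun t : ℕ → ℝ => Df (∑' j : ℕ, t j • x j) w) μ := by
    intro w
    apply Integrable.mono' (integrable_const ((L:ℝ) * ‖w‖)) (hDm w)
    filter_upwards with t
    simpa using norm_Df_le hfL hDf _ w
  have key : ∀ n : ℕ,
      (∫ t : ℕ → ℝ, (f (x n + ∑' j : ℕ, (if j = n then (0:ℝ) else t j) • x j)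
          - f (∑' j : ℕ, (if j = n then (0:ℝ) else t j) • x j)) ∂μ)
        = ∫ t : ℕ → ℝ, Df (∑' j : ℕ, t j • x j) (x n) ∂μ := by
    intro n
    rw [Stmt9.integral_resample hμ n _ (hDm (x n)) ((L:ℝ) * ‖x n‖)
      (fun t => norm_Df_le hfL hDf _ _)]
    apply integral_congr_ae
    filter_upwards [Stmt9.ae_mem_cube hμ] with t ht
    have h1 : ∀ r : ℝ, (∑' j : ℕ, Function.update t n r j • x j)
        = (∑' j : ℕ, (if j = n then (0:ℝ) else t j) • x j) + r • x n :=
      fun r => tsum_update hxnorm ht n r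
    show _ = ∫ r in Icc (0:ℝ) 1, Df (∑' j : ℕ, Function.update t n r j • x j) (x n)
    calc f (x n + ∑' j : ℕ, (if j = n then (0:ℝ) else t j) • x j)
          - f (∑' j : ℕ, (if j = n then (0:ℝ) else t j) • x j)
        = f ((∑' j : ℕ, (if j = n then (0:ℝ) else t j) • x j) + x n)
          - f (∑' j : ℕ, (if j = n then (0:ℝ) else t j) • x j) := by rw [add_comm]
      _ = ∫ r in (0:ℝ)..1,
            Df ((∑' j : ℕ, (if j = n then (0:ℝ) else t j) • x j) + r • x n) (x n) :=
          ftc_aux hfL hDf _ _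
      _ = ∫ r in Icc (0:ℝ) 1,
            Df ((∑' j : ℕ, (if j = n then (0:ℝ) else t j) • x j) + r • x n) (x n) := by
          rw [intervalIntegral.integral_of_le zero_le_one, ← integral_Icc_eq_integral_Ioc]
      _ = ∫ r in Icc (0:ℝ) 1, Df (∑' j : ℕ, Function.update t n r j • x j) (x n) := by
          refine integral_congr_ae (Filter.Eventually.of_forall fun r => ?_)
          exact congrArg (fun y : X => Df y (x n)) (h1 r).symm
  have main : (∑ n ∈ s, c n *
          ∫ t : ℕ → ℝ,
            (f (x n + ∑' j : ℕ, (if j = n then (0 : ℝ) else t j) • x j)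
              - f (∑' j : ℕ, (if j = n then (0 : ℝ) else t j) • x j)) ∂μ)
        = ∫ t : ℕ → ℝ, Df (∑' j : ℕ, t j • x j) (∑ n ∈ s, c n • x n) ∂μ := by
    calc (∑ n ∈ s, c n *
          ∫ t : ℕ → ℝ,
            (f (x n + ∑' j : ℕ, (if j = n then (0 : ℝ) else t j) • x j)
              - f (∑' j : ℕ, (if j = n then (0 : ℝ) else t j) • x j)) ∂μ)
        = ∑ n ∈ s, c n * ∫ t : ℕ → ℝ, Df (∑' j : ℕ, t j • x j) (x n) ∂μ :=
          Finset.sum_congr rfl (fun n _ => by rw [key n])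
      _ = ∑ n ∈ s, ∫ t : ℕ → ℝ, c n * Df (∑' j : ℕ, t j • x j) (x n) ∂μ :=
          Finset.sum_congr rfl (fun n _ => (integral_const_mul _ _).symm)
      _ = ∫ t : ℕ → ℝ, ∑ n ∈ s, c n * Df (∑' j : ℕ, t j • x j) (x n) ∂μ :=
          (integral_finset_sum s (fun n _ => (hInt (x n)).const_mul (c n))).symm
      _ = ∫ t : ℕ → ℝ, Df (∑' j : ℕ, t j • x j) (∑ n ∈ s, c n • x n) ∂μ := by
          refine integral_congr_ae (Filter.Eventually.of_forall fun t => ?_)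
          simp only [map_sum, _root_.map_smul, smul_eq_mul]
  refine ⟨main, ?_⟩
  rw [main]
  have hb := norm_integral_le_of_norm_le_const (μ := μ)
    (f := fun t : ℕ → ℝ => Df (∑' j : ℕ, t j • x j) (∑ n ∈ s, c n • x n))
    (C := (L:ℝ) * ‖∑ n ∈ s, c n • x n‖)
    (Filter.Eventually.of_forall fun t => by
      rw [Real.norm_eq_abs]; exact norm_Df_le hfL hDf _ _)
  rw [show μ.real univ = 1 by simp, mul_one] at hb
  calc |∫ t : ℕ → ℝ, Df (∑' j : ℕ, t j • x j) (∑ n ∈ s, c n • x n) ∂μ|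
      = ‖∫ t : ℕ → ℝ, Df (∑' j : ℕ, t j • x j) (∑ n ∈ s, c n • x n) ∂μ‖ :=
        (Real.norm_eq_abs _).symm
    _ ≤ (L:ℝ) * ‖∑ n ∈ s, c n • x n‖ := hb
    _ = ‖∑ n ∈ s, c n • x n‖ * (L:ℝ) := mul_comm _ _


end
end

section
/- Let K be a compact pointed metric space for which there exist a sequence (ε_n) of positive reals tending to 0, a real number ρ < 1/2, and finite subsets N_n of K such that each N_n is ε_n-separated (distinct points of N_n are at distance ≥ ε_n) and ρε_n-dense in K (every point of K is within distance ρε_n of N_n). Then the Lipschitz-free space F(K) has the metric approximation property. -/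
open Filter Topology Metric Set

noncomputable section


/-! ## Preamble: the space `Lip₀(M)` of Lipschitz functions vanishing at the base point,
and the Lipschitz-free space `F(M)` as the closed linear span of the Dirac evaluation
functionals in the dual of `Lip₀(M)`. The norm of `Lip₀(M)` is the Lipschitz constant,
realized as the sup norm of the collection of all difference quotients (slopes). -/

variable (M : Type*) [MetricSpace M] (base : M)

/-- The submodule of `M → ℝ` consisting of Lipschitz functions vanishing at `base`. -/
def lipZeroSubmodule : Submodule ℝ (M → ℝ) where
  carrier := {f | f base = 0 ∧ ∃ C : NNReal, LipschitzWith C f}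
  zero_mem' := ⟨rfl, 0, LipschitzWith.const' 0⟩
  add_mem' := by
    rintro f g ⟨hf0, Cf, hf⟩ ⟨hg0, Cg, hg⟩
    exact ⟨by simp [hf0, hg0], Cf + Cg, hf.add hg⟩
  smul_mem' := by
    rintro c f ⟨hf0, Cf, hf⟩
    refine ⟨by simp [hf0], ‖c‖₊ * Cf, ?_⟩
    exact (lipschitzWith_smul (β := ℝ) c).comp hf

/-- The type underlying `Lip₀(M)`. -/
def Lip0 : Type _ := ↥(lipZeroSubmodule M base)

variable {M base}

/-- The function underlying an element of `Lip₀(M)`. -/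
def Lip0.toFun (f : Lip0 M base) : M → ℝ :=
  (show ↥(lipZeroSubmodule M base) from f).val

instance : AddCommGroup (Lip0 M base) :=
  inferInstanceAs (AddCommGroup ↥(lipZeroSubmodule M base))

instance : Module ℝ (Lip0 M base) :=
  inferInstanceAs (Module ℝ ↥(lipZeroSubmodule M base))

theorem Lip0.toFun_add (f g : Lip0 M base) : (f + g).toFun = f.toFun + g.toFun := rfl
theorem Lip0.toFun_smul (c : ℝ) (f : Lip0 M base) : (c • f).toFun = c • f.toFun := rfl
theorem Lip0.toFun_base (f : Lip0 M base) : f.toFun base = 0 :=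
  (show ↥(lipZeroSubmodule M base) from f).property.1
theorem Lip0.lipschitz (f : Lip0 M base) : ∃ C : NNReal, LipschitzWith C f.toFun :=
  (show ↥(lipZeroSubmodule M base) from f).property.2

variable (M) in
/-- The pairs of distinct points of `M`. -/
def OffDiag : Type _ := {p : M × M // p.1 ≠ p.2}

/-- The collection of slopes (difference quotients) of a function. -/
def slopes (f : Lip0 M base) (p : OffDiag M) : ℝ :=
  (f.toFun p.val.1 - f.toFun p.val.2) / dist p.val.1 p.val.2

theorem slopes_add (f g : Lip0 M base) (p : OffDiag M) :
    slopes (f + g) p = slopes f p + slopes g p := by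
  simp only [slopes, Lip0.toFun_add, Pi.add_apply]
  ring

theorem slopes_smul (c : ℝ) (f : Lip0 M base) (p : OffDiag M) :
    slopes (c • f) p = c * slopes f p := by
  simp only [slopes, Lip0.toFun_smul, Pi.smul_apply, smul_eq_mul]
  ring

theorem slopes_memℓp (f : Lip0 M base) :
    Memℓp (fun p : OffDiag M => slopes f p) ⊤ := by
  obtain ⟨C, hC⟩ := f.lipschitz
  apply memℓp_infty
  refine ⟨C, ?_⟩
  rintro - ⟨p, rfl⟩
  show ‖slopes f p‖ ≤ (C:ℝ)
  have hd : (0:ℝ) < dist p.val.1 p.val.2 := dist_pos.2 p.property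
  have h := hC.dist_le_mul p.val.1 p.val.2
  rw [Real.dist_eq] at h
  rw [Real.norm_eq_abs, slopes, abs_div, abs_of_pos hd, div_le_iff₀ hd]
  exact h

variable (M base) in
/-- The canonical embedding of `Lip₀(M)` into `ℓ∞` over the pairs of distinct points,
sending a function to its collection of slopes. -/
def slopeEmbed : Lip0 M base →ₗ[ℝ] lp (fun _ : OffDiag M => ℝ) ⊤ where
  toFun f := ⟨fun p => slopes f p, slopes_memℓp f⟩
  map_add' f g := by
    ext p
    exact slopes_add f g p
  map_smul' c f := by
    ext p
    simpa using slopes_smul c f p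

theorem slopeEmbed_injective : Function.Injective (slopeEmbed M base) := by
  intro f g hfg
  have key : ∀ p : OffDiag M, slopes f p = slopes g p := by
    intro p
    exact congrFun (congrArg Subtype.val hfg) p
  apply Subtype.ext
  funext x
  show f.toFun x = g.toFun x
  rcases eq_or_ne x base with rfl | hx
  · rw [f.toFun_base, g.toFun_base]
  · have h := key ⟨(x, base), hx⟩
    have hd : (0:ℝ) < dist x base := dist_pos.2 hx
    simp only [slopes, f.toFun_base, g.toFun_base, sub_zero] at h
    rw [div_eq_div_iff hd.ne' hd.ne'] at h
    exact mul_right_cancel₀ hd.ne' h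

/-- The norm on `Lip₀(M)`: the Lipschitz constant. -/
instance : NormedAddCommGroup (Lip0 M base) :=
  NormedAddCommGroup.induced _ _ (slopeEmbed M base) slopeEmbed_injective

instance : NormedSpace ℝ (Lip0 M base) :=
  NormedSpace.induced ℝ _ _ (slopeEmbed M base)

theorem Lip0.abs_apply_le (f : Lip0 M base) (x : M) :
    |f.toFun x| ≤ ‖f‖ * dist x base := by
  rcases eq_or_ne x base with rfl | hx
  · simp [f.toFun_base, mul_nonneg (norm_nonneg f) dist_nonneg]
  · have hd : (0:ℝ) < dist x base := dist_pos.2 hx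
    have h : ‖(slopeEmbed M base f) ⟨(x, base), hx⟩‖ ≤ ‖slopeEmbed M base f‖ :=
      lp.norm_apply_le_norm ENNReal.top_ne_zero _ _
    have h2 : ‖slopeEmbed M base f‖ = ‖f‖ := rfl
    rw [h2] at h
    have h3 : (slopeEmbed M base f) ⟨(x, base), hx⟩ = f.toFun x / dist x base := by
      show slopes f _ = _
      simp [slopes, f.toFun_base]
    rw [h3, Real.norm_eq_abs, abs_div, abs_of_pos hd, div_le_iff₀ hd] at h
    exact h


variable (M base) in
/-- The Dirac evaluation functional `δ(x) ∈ Lip₀(M)*`. -/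
def dirac (x : M) : StrongDual ℝ (Lip0 M base) :=
  LinearMap.mkContinuous
    { toFun := fun f => f.toFun x
      map_add' := fun f g => congrFun (Lip0.toFun_add f g) x
      map_smul' := fun c f => congrFun (Lip0.toFun_smul c f) x }
    (dist x base)
    (fun f => by
      rw [mul_comm]
      simpa [Real.norm_eq_abs] using f.abs_apply_le x)

variable (M base) in
/-- The Lipschitz-free space `F(M)` over a pointed metric space `M`: the closed linear
span of the Dirac evaluation functionals in the dual of `Lip₀(M)`. -/
def freeSpaceSubmodule : Submodule ℝ (StrongDual ℝ (Lip0 M base)) :=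
  (Submodule.span ℝ (Set.range (dirac M base))).topologicalClosure

variable (M base) in
/-- The Lipschitz-free space `F(M)` over the pointed metric space `(M, base)`. -/
abbrev FreeSpace : Type _ := ↥(freeSpaceSubmodule M base)

variable (M base) in
/-- The canonical isometric embedding `δ : M → F(M)`. -/
def diracF (x : M) : FreeSpace M base :=
  ⟨dirac M base x,
    Submodule.le_topologicalClosure _ (Submodule.subset_span ⟨x, rfl⟩)⟩

/-- A normed space has the `λ`-bounded approximation property (`λ`-BAP) if its identity
is a limit, uniformly on compact sets, of finite-rank bounded linear operators of norm
at most `λ`.  The metric approximation property (MAP) is the `1`-BAP. -/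
def HasBAPWith (lam : ℝ) (X : Type*) [SeminormedAddCommGroup X] [NormedSpace ℝ X] : Prop :=
  ∀ K : Set X, IsCompact K → ∀ ε : ℝ, 0 < ε → ∃ T : X →L[ℝ] X,
    FiniteDimensional ℝ ↥(LinearMap.range (T : X →ₗ[ℝ] X)) ∧ ‖T‖ ≤ lam ∧ ∀ x ∈ K, ‖T x - x‖ < ε

/-- A normed space has the approximation property (AP) if its identity is a limit,
uniformly on compact sets, of finite-rank bounded linear operators. -/
def HasAP (X : Type*) [SeminormedAddCommGroup X] [NormedSpace ℝ X] : Prop :=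
  ∀ K : Set X, IsCompact K → ∀ ε : ℝ, 0 < ε → ∃ T : X →L[ℝ] X,
    FiniteDimensional ℝ ↥(LinearMap.range (T : X →ₗ[ℝ] X)) ∧ ∀ x ∈ K, ‖T x - x‖ < ε


/-! ### Auxiliary lemmas about `Lip0` -/

theorem Lip0.norm_def (f : Lip0 M base) : ‖f‖ = ‖slopeEmbed M base f‖ := rfl

theorem Lip0.abs_sub_apply_le (f : Lip0 M base) (u v : M) :
    |f.toFun u - f.toFun v| ≤ ‖f‖ * dist u v := by
  rcases eq_or_ne u v with rfl | huv
  · simp [mul_nonneg (norm_nonneg f) dist_nonneg]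
  · have hd : (0:ℝ) < dist u v := dist_pos.2 huv
    have h : ‖(slopeEmbed M base f) ⟨(u, v), huv⟩‖ ≤ ‖slopeEmbed M base f‖ :=
      lp.norm_apply_le_norm ENNReal.top_ne_zero _ _
    rw [← Lip0.norm_def] at h
    have h3 : (slopeEmbed M base f) ⟨(u, v), huv⟩
        = (f.toFun u - f.toFun v) / dist u v := rfl
    rw [h3, Real.norm_eq_abs, abs_div, abs_of_pos hd, div_le_iff₀ hd] at h
    exact h

theorem Lip0.norm_le_of_forall_slope (f : Lip0 M base) {C : ℝ} (hC : 0 ≤ C)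
    (h : ∀ u v : M, |f.toFun u - f.toFun v| ≤ C * dist u v) : ‖f‖ ≤ C := by
  rw [Lip0.norm_def]
  refine lp.norm_le_of_forall_le hC fun p => ?_
  have hd : (0:ℝ) < dist p.val.1 p.val.2 := dist_pos.2 p.property
  have h3 : (slopeEmbed M base f) p
      = (f.toFun p.val.1 - f.toFun p.val.2) / dist p.val.1 p.val.2 := rfl
  rw [h3, Real.norm_eq_abs, abs_div, abs_of_pos hd, div_le_iff₀ hd]
  exact h _ _

theorem dirac_apply (x : M) (f : Lip0 M base) : dirac M base x f = f.toFun x := rfl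


/-! ### Geometric scale sequence lemmas -/

section Scales

variable {ε : ℝ → ℝ} -- dummy

theorem eps_decay {ε : ℕ → ℝ} {ns : ℕ → ℕ}
    (hhalf : ∀ i, ε (ns (i + 1)) ≤ ε (ns i) / 2) (i j : ℕ) :
    ε (ns (i + j)) ≤ ε (ns i) * (1 / 2) ^ j := by
  induction j with
  | zero => simp
  | succ j ih =>
      have h := hhalf (i + j)
      calc ε (ns (i + (j + 1))) = ε (ns ((i + j) + 1)) := by ring_nf
        _ ≤ ε (ns (i + j)) / 2 := h
        _ ≤ (ε (ns i) * (1 / 2) ^ j) / 2 := by linarith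
        _ = ε (ns i) * (1 / 2) ^ (j + 1) := by ring

theorem eps_le_first {ε : ℕ → ℝ} {ns : ℕ → ℕ} (hε0 : 0 ≤ ε (ns 0))
    (hhalf : ∀ i, ε (ns (i + 1)) ≤ ε (ns i) / 2) (i : ℕ) :
    ε (ns i) ≤ ε (ns 0) := by
  have h := eps_decay hhalf 0 i
  simp only [Nat.zero_add] at h
  have h2 : (1 / 2 : ℝ) ^ i ≤ 1 := by
    apply pow_le_one₀ <;> norm_num
  nlinarith

theorem sum_eps_le {ε : ℕ → ℝ} {ns : ℕ → ℕ} (hεpos : ∀ n, 0 < ε n)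
    (hhalf : ∀ i, ε (ns (i + 1)) ≤ ε (ns i) / 2) (m : ℕ) {a : ℝ} (ha : 0 ≤ a)
    (S : Finset ℕ) (hS : S ⊆ Finset.range m) (hSd : ∀ i ∈ S, ε (ns i) ≤ a) :
    ∑ i ∈ S, ε (ns i) ≤ 2 * a := by
  rcases S.eq_empty_or_nonempty with rfl | hne
  · simp; linarith
  · set i0 := S.min' hne with hi0
    have hi0S : i0 ∈ S := S.min'_mem hne
    have hi0a : ε (ns i0) ≤ a := hSd i0 hi0S
    have hsub : S ⊆ Finset.Ico i0 m := by
      intro i hi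
      exact Finset.mem_Ico.2 ⟨S.min'_le i hi, Finset.mem_range.1 (hS hi)⟩
    calc ∑ i ∈ S, ε (ns i)
        ≤ ∑ i ∈ Finset.Ico i0 m, ε (ns i) :=
          Finset.sum_le_sum_of_subset_of_nonneg hsub (fun i _ _ => (hεpos _).le)
      _ = ∑ j ∈ Finset.range (m - i0), ε (ns (i0 + j)) := by
          rw [Finset.sum_Ico_eq_sum_range]
      _ ≤ ∑ j ∈ Finset.range (m - i0), ε (ns i0) * (1 / 2) ^ j :=
          Finset.sum_le_sum (fun j _ => eps_decay hhalf i0 j)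
      _ = ε (ns i0) * ∑ j ∈ Finset.range (m - i0), (1 / 2 : ℝ) ^ j := by
          rw [Finset.mul_sum]
      _ ≤ a * 2 := by
          apply mul_le_mul hi0a (sum_geometric_two_le _)
            (Finset.sum_nonneg fun j _ => by positivity) ha
      _ = 2 * a := by ring

end Scales


/-! ### The averaged retraction operator -/

section AvgOp

variable {K : Type*} [MetricSpace K] {base : K}

/-- The averaged composition-with-retractions function. -/
def avgFun (r : ℕ → K → K) (ns : ℕ → ℕ) (m : ℕ) (f : Lip0 K base) (z : K) : ℝ :=
  (m : ℝ)⁻¹ * ∑ i ∈ Finset.range m, (f.toFun (r (ns i) z) - f.toFun (r (ns i) base))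

theorem avgFun_base (r : ℕ → K → K) (ns : ℕ → ℕ) (m : ℕ) (f : Lip0 K base) :
    avgFun r ns m f base = 0 := by
  simp [avgFun]

theorem avgFun_slope {ε : ℕ → ℝ} {ρ : ℝ} {r : ℕ → K → K} {ns : ℕ → ℕ} {m : ℕ}
    (hεpos : ∀ n, 0 < ε n) (hρ0 : 0 ≤ ρ) (hc : 0 < 1 - 2 * ρ)
    (hrd : ∀ n z, dist z (r n z) ≤ ρ * ε n)
    (hloc : ∀ n (z z' : K), r n z ≠ r n z' → (1 - 2 * ρ) * ε n ≤ dist z z')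
    (hhalf : ∀ i, ε (ns (i + 1)) ≤ ε (ns i) / 2) (hm : 1 ≤ m)
    (f : Lip0 K base) (z z' : K) :
    |avgFun r ns m f z - avgFun r ns m f z'| ≤
      (1 + 4 * ρ / ((1 - 2 * ρ) * m)) * (‖f‖ * dist z z') := by
  classical
  set c : ℝ := 1 - 2 * ρ with hcdef
  set d : ℝ := dist z z' with hd
  have hm0 : (0:ℝ) < (m:ℝ) := by exact_mod_cast hm
  rcases eq_or_lt_of_le (dist_nonneg : (0:ℝ) ≤ d) with hd0 | hd0
  · -- d = 0, so z = z'
    have hzz : z = z' := by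
      rw [← dist_le_zero]; rw [← hd0]
    subst hzz
    simp [mul_nonneg (by positivity : (0:ℝ) ≤ 1 + 4 * ρ / (c * m))
      (mul_nonneg (norm_nonneg f) dist_nonneg)]
    exact mul_nonneg (add_nonneg zero_le_one (div_nonneg (by linarith) (mul_nonneg hc.le hm0.le)))
      (mul_nonneg (norm_nonneg f) dist_nonneg)
  · -- d > 0
    set e : ℕ → ℝ := fun i => if r (ns i) z = r (ns i) z' then 0 else ε (ns i) with he
    have key : ∀ i ∈ Finset.range m,
        |f.toFun (r (ns i) z) - f.toFun (r (ns i) z')| ≤ ‖f‖ * d + 2 * ρ * ‖f‖ * e i := by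
      intro i _
      by_cases heq : r (ns i) z = r (ns i) z'
      · simp only [he, heq, if_pos, sub_self, abs_zero]
        have : (0:ℝ) ≤ ‖f‖ * d := mul_nonneg (norm_nonneg f) dist_nonneg
        simp only [mul_zero]
        linarith
      · have h1 : |f.toFun (r (ns i) z) - f.toFun (r (ns i) z')| ≤
            ‖f‖ * dist (r (ns i) z) (r (ns i) z') := f.abs_sub_apply_le _ _
        have h2 : dist (r (ns i) z) (r (ns i) z') ≤ d + 2 * ρ * ε (ns i) := by
          have t4 : dist (r (ns i) z) (r (ns i) z') ≤
              dist (r (ns i) z) z + dist z z' + dist z' (r (ns i) z') := dist_triangle4 _ _ _ _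
          have e1 : dist (r (ns i) z) z ≤ ρ * ε (ns i) := by
            rw [dist_comm]; exact hrd _ _
          have e2 : dist z' (r (ns i) z') ≤ ρ * ε (ns i) := hrd _ _
          rw [← hd] at t4
          linarith
        have h3 : ‖f‖ * dist (r (ns i) z) (r (ns i) z') ≤ ‖f‖ * (d + 2 * ρ * ε (ns i)) :=
          mul_le_mul_of_nonneg_left h2 (norm_nonneg f)
        simp only [he, if_neg heq]
        calc |f.toFun (r (ns i) z) - f.toFun (r (ns i) z')|
            ≤ ‖f‖ * (d + 2 * ρ * ε (ns i)) := le_trans h1 h3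
          _ = ‖f‖ * d + 2 * ρ * ‖f‖ * ε (ns i) := by ring
    have hsum_e : ∑ i ∈ Finset.range m, e i ≤ 2 * (d / c) := by
      have hfil : ∑ i ∈ Finset.range m, e i
          = ∑ i ∈ (Finset.range m).filter (fun i => ¬ r (ns i) z = r (ns i) z'), ε (ns i) := by
        rw [Finset.sum_filter]
        apply Finset.sum_congr rfl
        intro i _
        by_cases heq : r (ns i) z = r (ns i) z' <;> simp [he, heq]
      rw [hfil]
      apply sum_eps_le hεpos hhalf m (by positivity)
        _ (Finset.filter_subset _ _)
      intro i hi
      have hne : r (ns i) z ≠ r (ns i) z' := by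
        simpa using (Finset.mem_filter.1 hi).2
      have hle : c * ε (ns i) ≤ d := by rw [hd]; exact hloc (ns i) z z' hne
      rw [le_div_iff₀ hc]
      linarith [hle, mul_comm (ε (ns i)) c]
    have h1 : avgFun r ns m f z - avgFun r ns m f z'
        = (m:ℝ)⁻¹ * ∑ i ∈ Finset.range m, (f.toFun (r (ns i) z) - f.toFun (r (ns i) z')) := by
      simp only [avgFun]
      rw [← mul_sub, ← Finset.sum_sub_distrib]
      congr 1
      apply Finset.sum_congr rfl
      intros; ring
    rw [h1, abs_mul, abs_of_nonneg (by positivity : (0:ℝ) ≤ (m:ℝ)⁻¹)]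
    calc (m:ℝ)⁻¹ * |∑ i ∈ Finset.range m, (f.toFun (r (ns i) z) - f.toFun (r (ns i) z'))|
        ≤ (m:ℝ)⁻¹ * ∑ i ∈ Finset.range m, |f.toFun (r (ns i) z) - f.toFun (r (ns i) z')| := by
          apply mul_le_mul_of_nonneg_left (Finset.abs_sum_le_sum_abs _ _) (by positivity)
      _ ≤ (m:ℝ)⁻¹ * ∑ i ∈ Finset.range m, (‖f‖ * d + 2 * ρ * ‖f‖ * e i) := by
          apply mul_le_mul_of_nonneg_left (Finset.sum_le_sum key) (by positivity)
      _ = (m:ℝ)⁻¹ * ((m:ℝ) * (‖f‖ * d) + 2 * ρ * ‖f‖ * ∑ i ∈ Finset.range m, e i) := by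
          rw [Finset.sum_add_distrib, Finset.sum_const, Finset.card_range, ← Finset.mul_sum]
          simp [nsmul_eq_mul]
      _ ≤ (m:ℝ)⁻¹ * ((m:ℝ) * (‖f‖ * d) + 2 * ρ * ‖f‖ * (2 * (d / c))) := by
          apply mul_le_mul_of_nonneg_left _ (by positivity)
          have h2ρf : (0:ℝ) ≤ 2 * ρ * ‖f‖ := by positivity
          nlinarith [hsum_e]
      _ = (1 + 4 * ρ / (c * (m:ℝ))) * (‖f‖ * d) := by
          field_simp
          ring


theorem avgFun_close {ε : ℕ → ℝ} {ρ : ℝ} {r : ℕ → K → K} {ns : ℕ → ℕ} {m : ℕ}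
    (hεpos : ∀ n, 0 < ε n) (hρ0 : 0 ≤ ρ)
    (hrd : ∀ n z, dist z (r n z) ≤ ρ * ε n)
    (hhalf : ∀ i, ε (ns (i + 1)) ≤ ε (ns i) / 2) (hm : 1 ≤ m)
    (f : Lip0 K base) (x : K) :
    |avgFun r ns m f x - f.toFun x| ≤ 2 * ρ * ε (ns 0) * ‖f‖ := by
  have hm0 : (0:ℝ) < (m:ℝ) := by exact_mod_cast hm
  have heq : avgFun r ns m f x - f.toFun x
      = (m:ℝ)⁻¹ * ∑ i ∈ Finset.range m,
          ((f.toFun (r (ns i) x) - f.toFun x) - (f.toFun (r (ns i) base) - f.toFun base)) := by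
    simp only [avgFun, Lip0.toFun_base, sub_zero, Finset.sum_sub_distrib,
      Finset.sum_const, Finset.card_range, nsmul_eq_mul]
    field_simp
    ring
  rw [heq, abs_mul, abs_of_nonneg (by positivity : (0:ℝ) ≤ (m:ℝ)⁻¹)]
  have key : ∀ i ∈ Finset.range m,
      |(f.toFun (r (ns i) x) - f.toFun x) - (f.toFun (r (ns i) base) - f.toFun base)|
        ≤ 2 * ρ * ε (ns 0) * ‖f‖ := by
    intro i _
    have hεi : ε (ns i) ≤ ε (ns 0) := eps_le_first (hεpos _).le hhalf i
    have b1 : |f.toFun (r (ns i) x) - f.toFun x| ≤ ‖f‖ * (ρ * ε (ns i)) := by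
      refine le_trans (f.abs_sub_apply_le _ _) ?_
      apply mul_le_mul_of_nonneg_left _ (norm_nonneg f)
      rw [dist_comm]; exact hrd _ _
    have b2 : |f.toFun (r (ns i) base) - f.toFun base| ≤ ‖f‖ * (ρ * ε (ns i)) := by
      refine le_trans (f.abs_sub_apply_le _ _) ?_
      apply mul_le_mul_of_nonneg_left _ (norm_nonneg f)
      rw [dist_comm]; exact hrd _ _
    have habs := abs_sub (f.toFun (r (ns i) x) - f.toFun x)
      (f.toFun (r (ns i) base) - f.toFun base)
    have hρε : ‖f‖ * (ρ * ε (ns i)) ≤ ‖f‖ * (ρ * ε (ns 0)) := by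
      apply mul_le_mul_of_nonneg_left _ (norm_nonneg f)
      apply mul_le_mul_of_nonneg_left hεi hρ0
    calc |(f.toFun (r (ns i) x) - f.toFun x) - (f.toFun (r (ns i) base) - f.toFun base)|
        ≤ |f.toFun (r (ns i) x) - f.toFun x| + |f.toFun (r (ns i) base) - f.toFun base| :=
          abs_sub _ _
      _ ≤ ‖f‖ * (ρ * ε (ns i)) + ‖f‖ * (ρ * ε (ns i)) := add_le_add b1 b2
      _ ≤ ‖f‖ * (ρ * ε (ns 0)) + ‖f‖ * (ρ * ε (ns 0)) := add_le_add hρε hρε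
      _ = 2 * ρ * ε (ns 0) * ‖f‖ := by ring
  calc (m:ℝ)⁻¹ * |∑ i ∈ Finset.range m,
        ((f.toFun (r (ns i) x) - f.toFun x) - (f.toFun (r (ns i) base) - f.toFun base))|
      ≤ (m:ℝ)⁻¹ * ∑ i ∈ Finset.range m,
          |(f.toFun (r (ns i) x) - f.toFun x) - (f.toFun (r (ns i) base) - f.toFun base)| :=
        mul_le_mul_of_nonneg_left (Finset.abs_sum_le_sum_abs _ _) (by positivity)
    _ ≤ (m:ℝ)⁻¹ * ∑ _i ∈ Finset.range m, (2 * ρ * ε (ns 0) * ‖f‖) :=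
        mul_le_mul_of_nonneg_left (Finset.sum_le_sum key) (by positivity)
    _ = 2 * ρ * ε (ns 0) * ‖f‖ := by
        rw [Finset.sum_const, Finset.card_range, nsmul_eq_mul]
        field_simp

end AvgOp



theorem Lip0.toFun_zero : (0 : Lip0 M base).toFun = 0 := rfl

theorem Lip0.toFun_sum {ι : Type*} (s : Finset ι) (g : ι → Lip0 M base) :
    (∑ i ∈ s, g i).toFun = ∑ i ∈ s, (g i).toFun := by
  classical
  induction s using Finset.induction with
  | empty => simp [Lip0.toFun_zero]
  | insert _ _ hnot ih =>
      rw [Finset.sum_insert hnot, Finset.sum_insert hnot, Lip0.toFun_add, ih]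

abbrev FSOp (X : Type*) [SeminormedAddCommGroup X] [NormedSpace ℝ X] : Type _ := X →L[ℝ] X

abbrev FSLin (X : Type*) [SeminormedAddCommGroup X] [NormedSpace ℝ X] : Type _ := X →ₗ[ℝ] X

section MainOp

variable {K : Type*} [MetricSpace K]

theorem exists_op (base : K)
    {ε : ℕ → ℝ} {ρ : ℝ} {r : ℕ → K → K} {ns : ℕ → ℕ} {m : ℕ}
    {N : ℕ → Set K} (hNfin : ∀ n, (N n).Finite)
    (hεpos : ∀ n, 0 < ε n) (hρ0 : 0 ≤ ρ) (hc : 0 < 1 - 2 * ρ)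
    (hrmem : ∀ n z, r n z ∈ N n)
    (hrd : ∀ n z, dist z (r n z) ≤ ρ * ε n)
    (hloc : ∀ n (z z' : K), r n z ≠ r n z' → (1 - 2 * ρ) * ε n ≤ dist z z')
    (hhalf : ∀ i, ε (ns (i + 1)) ≤ ε (ns i) / 2) (hm : 1 ≤ m) :
    ∃ T : FSOp (FreeSpace K base),
      FiniteDimensional ℝ ↥(LinearMap.range (T : FSLin (FreeSpace K base))) ∧
      ‖T‖ ≤ 1 + 4 * ρ / ((1 - 2 * ρ) * m) ∧
      ∀ x : K, ‖T (diracF K base x) - diracF K base x‖ ≤ 2 * ρ * ε (ns 0) := by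
  classical
  have hm0 : (0:ℝ) < (m:ℝ) := by exact_mod_cast hm
  set κ : ℝ := 1 + 4 * ρ / ((1 - 2 * ρ) * m) with hκdef
  have hκ0 : (0:ℝ) ≤ κ := by
    have h4 : (0:ℝ) ≤ 4 * ρ / ((1 - 2 * ρ) * m) :=
      div_nonneg (by linarith) (mul_nonneg hc.le hm0.le)
    rw [hκdef]
    linarith
  -- membership of the averaged function in Lip₀
  have hmem : ∀ f : Lip0 K base, (avgFun r ns m f) ∈ lipZeroSubmodule K base := by
    intro f
    refine ⟨avgFun_base r ns m f, (κ * ‖f‖).toNNReal,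
      LipschitzWith.of_dist_le_mul fun z z' => ?_⟩
    rw [Real.coe_toNNReal _ (mul_nonneg hκ0 (norm_nonneg f)), Real.dist_eq]
    calc |avgFun r ns m f z - avgFun r ns m f z'|
        ≤ κ * (‖f‖ * dist z z') := avgFun_slope hεpos hρ0 hc hrd hloc hhalf hm f z z'
      _ = κ * ‖f‖ * dist z z' := by ring
  have hadd : ∀ (f g : Lip0 K base) (z : K),
      avgFun r ns m (f + g) z = avgFun r ns m f z + avgFun r ns m g z := by
    intro f g z
    simp only [avgFun, Lip0.toFun_add, Pi.add_apply]
    rw [← mul_add, ← Finset.sum_add_distrib]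
    congr 1
    apply Finset.sum_congr rfl
    intros; ring
  have hsmul : ∀ (a : ℝ) (f : Lip0 K base) (z : K),
      avgFun r ns m (a • f) z = a * avgFun r ns m f z := by
    intro a f z
    simp only [avgFun, Lip0.toFun_smul, Pi.smul_apply, smul_eq_mul, ← mul_sub,
      ← Finset.mul_sum]
    ring
  let E0 : Lip0 K base →ₗ[ℝ] Lip0 K base :=
    { toFun := fun f => ⟨avgFun r ns m f, hmem f⟩
      map_add' := fun f g => Subtype.ext (funext fun z => hadd f g z)
      map_smul' := fun a f => Subtype.ext (funext fun z => hsmul a f z) }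
  have hE0b : ∀ f : Lip0 K base, ‖E0 f‖ ≤ κ * ‖f‖ := by
    intro f
    apply Lip0.norm_le_of_forall_slope _ (mul_nonneg hκ0 (norm_nonneg f))
    intro u v
    calc |avgFun r ns m f u - avgFun r ns m f v|
        ≤ κ * (‖f‖ * dist u v) := avgFun_slope hεpos hρ0 hc hrd hloc hhalf hm f u v
      _ = κ * ‖f‖ * dist u v := by ring
  let E : Lip0 K base →L[ℝ] Lip0 K base := E0.mkContinuous κ hE0b
  have hEnorm : ‖E‖ ≤ κ := LinearMap.mkContinuous_norm_le E0 hκ0 hE0b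
  have hEapp : ∀ f : Lip0 K base, (E f).toFun = avgFun r ns m f := fun f => rfl
  -- the indicator bump functions
  have hind : ∀ (i : ℕ) (y : K),
      (fun z => (if r (ns i) z = y then (1:ℝ) else 0)
        - (if r (ns i) base = y then (1:ℝ) else 0)) ∈ lipZeroSubmodule K base := by
    intro i y
    have hpos : (0:ℝ) < (1 - 2 * ρ) * ε (ns i) := mul_pos hc (hεpos _)
    refine ⟨by simp, (((1 - 2 * ρ) * ε (ns i))⁻¹).toNNReal,
      LipschitzWith.of_dist_le_mul fun z z' => ?_⟩
    rw [Real.coe_toNNReal _ (inv_nonneg.2 hpos.le), Real.dist_eq]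
    have harith : ((if r (ns i) z = y then (1:ℝ) else 0)
          - (if r (ns i) base = y then (1:ℝ) else 0))
        - ((if r (ns i) z' = y then (1:ℝ) else 0)
          - (if r (ns i) base = y then (1:ℝ) else 0))
        = (if r (ns i) z = y then (1:ℝ) else 0) - (if r (ns i) z' = y then (1:ℝ) else 0) := by
      ring
    rw [harith]
    by_cases heq : r (ns i) z = r (ns i) z'
    · rw [heq, sub_self, abs_zero]
      exact mul_nonneg (inv_nonneg.2 hpos.le) dist_nonneg
    · have h1 : |(if r (ns i) z = y then (1:ℝ) else 0)
          - (if r (ns i) z' = y then (1:ℝ) else 0)| ≤ 1 := by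
        split_ifs <;> norm_num
      have h2 : (1 - 2 * ρ) * ε (ns i) ≤ dist z z' := hloc _ _ _ heq
      calc |(if r (ns i) z = y then (1:ℝ) else 0)
            - (if r (ns i) z' = y then (1:ℝ) else 0)| ≤ 1 := h1
        _ = ((1 - 2 * ρ) * ε (ns i))⁻¹ * ((1 - 2 * ρ) * ε (ns i)) := by
            field_simp
            exact (div_self (hεpos _).ne').symm
        _ ≤ ((1 - 2 * ρ) * ε (ns i))⁻¹ * dist z z' := by
            exact mul_le_mul_of_nonneg_left h2 (inv_nonneg.2 hpos.le)
  let hfun : ℕ → K → Lip0 K base := fun i y => ⟨_, hind i y⟩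
  let Fi : ℕ → Finset K := fun i => (hNfin (ns i)).toFinset
  -- representation of `E f` as a finite linear combination
  have hEf : ∀ f : Lip0 K base, E f = (m:ℝ)⁻¹ •
      ∑ i ∈ Finset.range m, ∑ y ∈ Fi i, f.toFun y • hfun i y := by
    intro f
    apply Subtype.ext
    funext z
    have hco : ((m:ℝ)⁻¹ • ∑ i ∈ Finset.range m, ∑ y ∈ Fi i,
          f.toFun y • hfun i y).toFun z
        = (m:ℝ)⁻¹ * ∑ i ∈ Finset.range m, ∑ y ∈ Fi i,
            f.toFun y * ((hfun i y).toFun z) := by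
      rw [Lip0.toFun_smul]
      simp only [Pi.smul_apply, smul_eq_mul]
      congr 1
      rw [Lip0.toFun_sum]
      simp only [Finset.sum_apply]
      apply Finset.sum_congr rfl
      intro i _
      rw [Lip0.toFun_sum]
      simp only [Finset.sum_apply]
      apply Finset.sum_congr rfl
      intro y _
      rw [Lip0.toFun_smul]
      simp [Pi.smul_apply]
    show avgFun r ns m f z
        = ((m:ℝ)⁻¹ • ∑ i ∈ Finset.range m, ∑ y ∈ Fi i, f.toFun y • hfun i y).toFun z
    rw [hco]
    have hinner : ∀ i : ℕ, ∑ y ∈ Fi i, f.toFun y * ((hfun i y).toFun z)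
        = f.toFun (r (ns i) z) - f.toFun (r (ns i) base) := by
      intro i
      have hz : r (ns i) z ∈ Fi i := (hNfin (ns i)).mem_toFinset.2 (hrmem _ _)
      have hb : r (ns i) base ∈ Fi i := (hNfin (ns i)).mem_toFinset.2 (hrmem _ _)
      have : ∀ y ∈ Fi i, f.toFun y * ((hfun i y).toFun z)
          = (if r (ns i) z = y then f.toFun y else 0)
            - (if r (ns i) base = y then f.toFun y else 0) := by
        intro y _
        show f.toFun y * ((if r (ns i) z = y then (1:ℝ) else 0)
          - (if r (ns i) base = y then (1:ℝ) else 0)) = _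
        split_ifs <;> ring
      rw [Finset.sum_congr rfl this, Finset.sum_sub_distrib,
        Finset.sum_ite_eq, Finset.sum_ite_eq, if_pos hz, if_pos hb]
    rw [Finset.sum_congr rfl (fun i _ => hinner i)]
    rfl
  -- dual representation
  have hrep : ∀ φ : StrongDual ℝ (Lip0 K base),
      φ.comp E = ∑ i ∈ Finset.range m, ∑ y ∈ Fi i,
        ((m:ℝ)⁻¹ * φ (hfun i y)) • dirac K base y := by
    intro φ
    apply ContinuousLinearMap.ext
    intro f
    show φ (E f) = _
    rw [hEf f, map_smul, map_sum]
    simp only [map_sum, map_smul, smul_eq_mul, ContinuousLinearMap.sum_apply,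
      ContinuousLinearMap.smul_apply, dirac_apply]
    rw [Finset.mul_sum]
    apply Finset.sum_congr rfl
    intro i _
    rw [Finset.mul_sum]
    apply Finset.sum_congr rfl
    intro y _
    ring
  -- the operator on the free space
  have hmemT : ∀ ψ : FreeSpace K base,
      (ψ : StrongDual ℝ (Lip0 K base)).comp E ∈ freeSpaceSubmodule K base := by
    intro ψ
    rw [hrep]
    apply Submodule.sum_mem
    intro i _
    apply Submodule.sum_mem
    intro y _
    apply Submodule.smul_mem
    exact Submodule.le_topologicalClosure _ (Submodule.subset_span ⟨y, rfl⟩)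
  let T0 : FSLin (FreeSpace K base) :=
    { toFun := fun ψ => ⟨(ψ : StrongDual ℝ (Lip0 K base)).comp E, hmemT ψ⟩
      map_add' := fun ψ₁ ψ₂ => Subtype.ext (by
        simp [ContinuousLinearMap.add_comp])
      map_smul' := fun a ψ => Subtype.ext (by
        simp [ContinuousLinearMap.smul_comp]) }
  have hT0 : ∀ ψ : FreeSpace K base, ‖T0 ψ‖ ≤ κ * ‖ψ‖ := by
    intro ψ
    have h1 : ‖T0 ψ‖ = ‖(ψ : StrongDual ℝ (Lip0 K base)).comp E‖ := rfl
    have h2 : ‖ψ‖ = ‖(ψ : StrongDual ℝ (Lip0 K base))‖ := rfl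
    rw [h1, h2]
    calc ‖(ψ : StrongDual ℝ (Lip0 K base)).comp E‖
        ≤ ‖(ψ : StrongDual ℝ (Lip0 K base))‖ * ‖E‖ :=
          ContinuousLinearMap.opNorm_comp_le _ _
      _ ≤ ‖(ψ : StrongDual ℝ (Lip0 K base))‖ * κ :=
          mul_le_mul_of_nonneg_left hEnorm (norm_nonneg _)
      _ = κ * ‖(ψ : StrongDual ℝ (Lip0 K base))‖ := mul_comm _ _
  let T : FSOp (FreeSpace K base) := T0.mkContinuous κ hT0
  have hTnorm : ‖T‖ ≤ κ := LinearMap.mkContinuous_norm_le T0 hκ0 hT0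
  refine ⟨T, ?_, hTnorm, ?_⟩
  · -- finite rank
    have hrange : LinearMap.range (T : FSLin (FreeSpace K base)) ≤ Submodule.span ℝ
        (diracF K base '' (((Finset.range m).biUnion Fi : Finset K) : Set K)) := by
      rintro χ ⟨ψ, rfl⟩
      have hTψ : T ψ = ∑ i ∈ Finset.range m, ∑ y ∈ Fi i,
          ((m:ℝ)⁻¹ * (ψ : StrongDual ℝ (Lip0 K base)) (hfun i y)) • diracF K base y := by
        apply Subtype.ext
        have hco : ((∑ i ∈ Finset.range m, ∑ y ∈ Fi i,
              ((m:ℝ)⁻¹ * (ψ : StrongDual ℝ (Lip0 K base)) (hfun i y)) • diracF K base y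
                : FreeSpace K base) : StrongDual ℝ (Lip0 K base))
            = ∑ i ∈ Finset.range m, ∑ y ∈ Fi i,
                ((m:ℝ)⁻¹ * (ψ : StrongDual ℝ (Lip0 K base)) (hfun i y))
                  • dirac K base y := by
          rw [AddSubmonoidClass.coe_finset_sum]
          apply Finset.sum_congr rfl
          intro i _
          rw [AddSubmonoidClass.coe_finset_sum]
          apply Finset.sum_congr rfl
          intro y _
          rfl
        rw [hco]
        exact hrep _
      rw [ContinuousLinearMap.coe_coe, hTψ]
      apply Submodule.sum_mem
      intro i hi
      apply Submodule.sum_mem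
      intro y hy
      apply Submodule.smul_mem
      apply Submodule.subset_span
      exact Set.mem_image_of_mem _ (by
        rw [Finset.coe_biUnion]
        exact Set.mem_biUnion (Finset.mem_coe.2 hi) (Finset.mem_coe.2 hy))
    have hfin : (diracF K base '' (((Finset.range m).biUnion Fi : Finset K) : Set K)).Finite :=
      ((Finset.range m).biUnion Fi).finite_toSet.image _
    haveI := FiniteDimensional.span_of_finite ℝ hfin
    exact Submodule.finiteDimensional_of_le hrange
  · -- closeness on Dirac masses
    intro x
    have hb : (0:ℝ) ≤ 2 * ρ * ε (ns 0) :=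
      mul_nonneg (mul_nonneg (by norm_num) hρ0) (hεpos _).le
    have h1 : ‖T (diracF K base x) - diracF K base x‖
        = ‖(dirac K base x).comp E - dirac K base x‖ := rfl
    rw [h1]
    apply ContinuousLinearMap.opNorm_le_bound _ hb
    intro f
    have h2 : ((dirac K base x).comp E - dirac K base x) f
        = avgFun r ns m f x - f.toFun x := rfl
    rw [h2, Real.norm_eq_abs]
    calc |avgFun r ns m f x - f.toFun x|
        ≤ 2 * ρ * ε (ns 0) * ‖f‖ := avgFun_close hεpos hρ0 hrd hhalf hm f x
      _ = 2 * ρ * ε (ns 0) * ‖f‖ := rfl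

end MainOp

-- generic helper lemmas, to be inserted before the main theorem
section GenericBanach

variable {X : Type*} [SeminormedAddCommGroup X] [NormedSpace ℝ X]

theorem op_smul_inv_norm_le (T : X →L[ℝ] X) {κ : ℝ} (hκ : 0 < κ) (h : ‖T‖ ≤ κ) :
    ‖κ⁻¹ • T‖ ≤ 1 := by
  calc ‖κ⁻¹ • T‖ ≤ ‖κ⁻¹‖ * ‖T‖ := ContinuousLinearMap.opNorm_smul_le _ _
    _ = κ⁻¹ * ‖T‖ := by rw [Real.norm_eq_abs, abs_of_pos (inv_pos.2 hκ)]
    _ ≤ κ⁻¹ * κ := mul_le_mul_of_nonneg_left h (inv_pos.2 hκ).le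
    _ = 1 := inv_mul_cancel₀ hκ.ne'

theorem range_smul_fd (T : X →L[ℝ] X) (c : ℝ)
    (h : FiniteDimensional ℝ ↥(LinearMap.range (T : X →ₗ[ℝ] X))) :
    FiniteDimensional ℝ ↥(LinearMap.range ((c • T : X →L[ℝ] X) : X →ₗ[ℝ] X)) := by
  haveI := h
  have hle : LinearMap.range ((c • T : X →L[ℝ] X) : X →ₗ[ℝ] X) ≤ LinearMap.range (T : X →ₗ[ℝ] X) := by
    rintro χ ⟨ψ, rfl⟩
    have happ2 : (c • T) ψ = c • (T ψ) := rfl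
    rw [ContinuousLinearMap.coe_coe, happ2]
    exact Submodule.smul_mem _ _ (LinearMap.mem_range_self _ ψ)
  exact Submodule.finiteDimensional_of_le hle

theorem sum_approx_est (T : X →L[ℝ] X) {ι : Type*} (s : Finset ι) (a : ι → ℝ) (v : ι → X)
    {τ : ℝ} (hτ : 0 ≤ τ) (h : ∀ y ∈ s, ‖T (v y) - v y‖ ≤ τ) :
    ‖T (∑ y ∈ s, a y • v y) - ∑ y ∈ s, a y • v y‖ ≤ (∑ y ∈ s, |a y|) * τ := by
  have hrepr : T (∑ y ∈ s, a y • v y) - ∑ y ∈ s, a y • v y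
      = ∑ y ∈ s, a y • (T (v y) - v y) := by
    rw [map_sum, ← Finset.sum_sub_distrib]
    apply Finset.sum_congr rfl
    intro y _
    rw [map_smul, smul_sub]
  rw [hrepr]
  calc ‖∑ y ∈ s, a y • (T (v y) - v y)‖
      ≤ ∑ y ∈ s, ‖a y • (T (v y) - v y)‖ := norm_sum_le _ _
    _ ≤ ∑ y ∈ s, |a y| * τ := by
        apply Finset.sum_le_sum
        intro y hy
        rw [norm_smul, Real.norm_eq_abs]
        exact mul_le_mul_of_nonneg_left (h y hy) (abs_nonneg _)
    _ = (∑ y ∈ s, |a y|) * τ := by rw [← Finset.sum_mul]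

theorem pointwise_upgrade (T : X →L[ℝ] X) {κ R δ' : ℝ}
    (hκ1 : 1 ≤ κ) (hκ2 : κ ≤ 2) (hTnorm : ‖T‖ ≤ κ)
    {x ψ σ' : X}
    (hxψ : ‖x - ψ‖ ≤ δ') (hψσ : ‖ψ - σ'‖ ≤ δ') (hTσ : ‖T σ' - σ'‖ ≤ δ')
    (hxR : ‖x‖ ≤ R) :
    ‖(κ⁻¹ • T) x - x‖ ≤ 7 * δ' + (κ - 1) * R := by
  have hκpos : (0:ℝ) < κ := lt_of_lt_of_le one_pos hκ1
  have hδ'0 : 0 ≤ δ' := le_trans (norm_nonneg _) hxψ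
  have hTb : ∀ χ : X, ‖T χ‖ ≤ κ * ‖χ‖ := fun χ =>
    le_trans (T.le_opNorm χ) (mul_le_mul_of_nonneg_right hTnorm (norm_nonneg _))
  have hTx : ‖T x - x‖ ≤ 7 * δ' := by
    have e1 : T x - x = T (x - ψ) + (T ψ - ψ) + (ψ - x) := by
      rw [map_sub]; abel
    have e2 : T ψ - ψ = T (ψ - σ') + (T σ' - σ') + (σ' - ψ) := by
      rw [map_sub]; abel
    have b1 : ‖T (x - ψ)‖ ≤ 2 * δ' := by
      calc ‖T (x - ψ)‖ ≤ κ * ‖x - ψ‖ := hTb _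
        _ ≤ 2 * δ' := by nlinarith [norm_nonneg (x - ψ)]
    have b2 : ‖T (ψ - σ')‖ ≤ 2 * δ' := by
      calc ‖T (ψ - σ')‖ ≤ κ * ‖ψ - σ'‖ := hTb _
        _ ≤ 2 * δ' := by nlinarith [norm_nonneg (ψ - σ')]
    have b3 : ‖ψ - x‖ ≤ δ' := by rw [norm_sub_rev]; exact hxψ
    have b4 : ‖σ' - ψ‖ ≤ δ' := by rw [norm_sub_rev]; exact hψσ
    have c2 : ‖T ψ - ψ‖ ≤ 4 * δ' := by
      calc ‖T ψ - ψ‖ = ‖T (ψ - σ') + (T σ' - σ') + (σ' - ψ)‖ := by rw [← e2]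
        _ ≤ ‖T (ψ - σ') + (T σ' - σ')‖ + ‖σ' - ψ‖ := norm_add_le _ _
        _ ≤ ‖T (ψ - σ')‖ + ‖T σ' - σ'‖ + ‖σ' - ψ‖ := by
            linarith [norm_add_le (T (ψ - σ')) (T σ' - σ')]
        _ ≤ 4 * δ' := by linarith
    calc ‖T x - x‖ = ‖T (x - ψ) + (T ψ - ψ) + (ψ - x)‖ := by rw [← e1]
      _ ≤ ‖T (x - ψ) + (T ψ - ψ)‖ + ‖ψ - x‖ := norm_add_le _ _
      _ ≤ ‖T (x - ψ)‖ + ‖T ψ - ψ‖ + ‖ψ - x‖ := by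
          linarith [norm_add_le (T (x - ψ)) (T ψ - ψ)]
      _ ≤ 7 * δ' := by linarith
  have e3 : κ⁻¹ • T x - x = κ⁻¹ • (T x - x) + (κ⁻¹ - 1) • x := by
    rw [smul_sub, sub_smul, one_smul]; abel
  have hinv1 : κ⁻¹ ≤ 1 := by rw [inv_le_one₀ hκpos]; exact hκ1
  have habs2 : ‖κ⁻¹ - 1‖ = 1 - κ⁻¹ := by
    rw [Real.norm_eq_abs, abs_of_nonpos (by linarith : κ⁻¹ - 1 ≤ 0)]; ring
  have n1 : ‖κ⁻¹ • (T x - x)‖ = κ⁻¹ * ‖T x - x‖ := by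
    rw [norm_smul, Real.norm_eq_abs, abs_of_pos (inv_pos.2 hκpos)]
  have n2 : ‖(κ⁻¹ - 1) • x‖ = (1 - κ⁻¹) * ‖x‖ := by rw [norm_smul, habs2]
  have i2 : 1 - κ⁻¹ ≤ κ - 1 := by
    have hii : κ⁻¹ * κ = 1 := inv_mul_cancel₀ hκpos.ne'
    nlinarith
  have hR0 : 0 ≤ R := le_trans (norm_nonneg x) hxR
  have happly : (κ⁻¹ • T) x = κ⁻¹ • T x := rfl
  rw [happly, e3]
  calc ‖κ⁻¹ • (T x - x) + (κ⁻¹ - 1) • x‖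
      ≤ ‖κ⁻¹ • (T x - x)‖ + ‖(κ⁻¹ - 1) • x‖ := norm_add_le _ _
    _ = κ⁻¹ * ‖T x - x‖ + (1 - κ⁻¹) * ‖x‖ := by rw [n1, n2]
    _ ≤ 7 * δ' + (κ - 1) * R := by
        have hn3 := norm_nonneg (T x - x)
        have s1 : κ⁻¹ * ‖T x - x‖ ≤ 1 * ‖T x - x‖ := mul_le_mul_of_nonneg_right hinv1 hn3
        have s2 : (1 - κ⁻¹) * ‖x‖ ≤ (κ - 1) * R := by
          apply mul_le_mul (by linarith) hxR (norm_nonneg x) (by linarith)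
        linarith

end GenericBanach

set_option maxHeartbeats 1600000 in
set_option synthInstance.maxHeartbeats 400000 in
/-- Proposition 6. Let `K` be a compact pointed metric space admitting
positive reals `ε n → 0`, a real `ρ < 1/2` and finite subsets `N n ⊆ K` which are
`ε n`-separated and `ρ * ε n`-dense in `K`. Then `F(K)` has the metric approximation
property. -/
theorem free_spaces_stmt13 {K : Type*} [MetricSpace K] [CompactSpace K] (base : K)
    (ε : ℕ → ℝ) (hεpos : ∀ n, 0 < ε n) (hε0 : Filter.Tendsto ε Filter.atTop (nhds 0))
    (ρ : ℝ) (hρ : ρ < 1/2) (N : ℕ → Set K) (hNfin : ∀ n, (N n).Finite)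
    (hsep : ∀ n, ∀ x ∈ N n, ∀ y ∈ N n, x ≠ y → ε n ≤ dist x y)
    (hdense : ∀ n, ∀ z : K, ∃ y ∈ N n, dist z y ≤ ρ * ε n) :
    HasBAPWith 1 (FreeSpace K base) := by
  classical
  intro S hS δ hδ
  have hρ0 : 0 ≤ ρ := by
    obtain ⟨y, _, hdy⟩ := hdense 0 base
    nlinarith [dist_nonneg (x := base) (y := y), hεpos 0]
  have hc : 0 < 1 - 2 * ρ := by linarith
  choose r hrmem hrd using hdense
  have hloc : ∀ n (z z' : K), r n z ≠ r n z' → (1 - 2 * ρ) * ε n ≤ dist z z' := by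
    intro n z z' hne
    by_contra hlt
    push_neg at hlt
    have h1 := dist_triangle4 (r n z) z z' (r n z')
    have h2 : dist (r n z) z ≤ ρ * ε n := by rw [dist_comm]; exact hrd n z
    have h3 : dist z' (r n z') ≤ ρ * ε n := hrd n z'
    have h4 : ε n ≤ dist (r n z) (r n z') := hsep n _ (hrmem n z) _ (hrmem n z') hne
    linarith
  have hsmall : ∀ a : ℝ, 0 < a → ∃ n, ε n ≤ a := by
    intro a ha
    obtain ⟨n, hn⟩ := (hε0.eventually (gt_mem_nhds ha)).exists
    exact ⟨n, hn.le⟩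
  obtain ⟨R, hR0, hRb⟩ := Bornology.IsBounded.exists_pos_norm_le (E := FreeSpace K base) hS.isBounded
  obtain ⟨δ', hδ'val⟩ : ∃ d : ℝ, d = δ / 32 := ⟨_, rfl⟩
  have hδ'0 : 0 < δ' := by rw [hδ'val]; positivity
  obtain ⟨t, ht⟩ := hS.elim_finite_subcover (fun ψ : FreeSpace K base => Metric.ball ψ δ')
    (fun _ => Metric.isOpen_ball) (fun x hx => Set.mem_iUnion.2 ⟨x, Metric.mem_ball_self hδ'0⟩)
  have happ : ∀ ψ : FreeSpace K base, ∃ c : K →₀ ℝ,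
      ‖(ψ : StrongDual ℝ (Lip0 K base))
        - ∑ y ∈ c.support, c y • dirac K base y‖ < δ' := by
    intro ψ
    have hmem : (ψ : StrongDual ℝ (Lip0 K base)) ∈
        closure (Submodule.span ℝ (Set.range (dirac K base)) : Set _) := ψ.2
    obtain ⟨σ, hσmem, hσd⟩ := Metric.mem_closure_iff.1 hmem δ' hδ'0
    obtain ⟨co, hco⟩ := Finsupp.mem_span_range_iff_exists_finsupp.1 hσmem
    refine ⟨co, ?_⟩
    have hs : ∑ y ∈ co.support, co y • dirac K base y = σ := by
      rw [← hco]; rfl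
    rw [hs, ← dist_eq_norm]
    exact hσd
  choose cf hcf using happ
  obtain ⟨A, hAval⟩ : ∃ a : ℝ, a = (∑ φ ∈ t, ∑ y ∈ (cf φ).support, |cf φ y|) + 1 := ⟨_, rfl⟩
  have hA0 : 0 < A := by
    have hge : 0 ≤ ∑ φ ∈ t, ∑ y ∈ (cf φ).support, |cf φ y| :=
      Finset.sum_nonneg fun φ _ => Finset.sum_nonneg fun y _ => abs_nonneg _
    rw [hAval]; linarith
  have hR1 : (0:ℝ) < R + 1 := by linarith
  obtain ⟨δ0, hδ0val⟩ : ∃ d : ℝ, d = min 1 (δ / (8 * (R + 1))) := ⟨_, rfl⟩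
  have hδ00 : 0 < δ0 := by
    rw [hδ0val]
    exact lt_min one_pos (div_pos hδ (by nlinarith))
  have hδ01 : δ0 ≤ 1 := by rw [hδ0val]; exact min_le_left _ _
  have hδ0R : δ0 ≤ δ / (8 * (R + 1)) := by rw [hδ0val]; exact min_le_right _ _
  obtain ⟨m0, hm0⟩ := exists_nat_ge (4 * ρ / ((1 - 2 * ρ) * δ0))
  obtain ⟨m, hmval⟩ : ∃ m : ℕ, m = m0 + 1 := ⟨_, rfl⟩
  have hm1 : 1 ≤ m := by omega
  have hmR : (0:ℝ) < (m:ℝ) := by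
    have : 0 < m := hm1
    exact_mod_cast this
  have hκδ0 : 4 * ρ / ((1 - 2 * ρ) * (m:ℝ)) ≤ δ0 := by
    rw [div_le_iff₀ (mul_pos hc hmR)]
    have hposd : 0 < (1 - 2 * ρ) * δ0 := mul_pos hc hδ00
    have h2 : 4 * ρ / ((1 - 2 * ρ) * δ0) ≤ (m:ℝ) := by
      refine le_trans hm0 ?_
      rw [hmval]
      exact_mod_cast Nat.le_succ m0
    have h3 : 4 * ρ ≤ (m:ℝ) * ((1 - 2 * ρ) * δ0) := (div_le_iff₀ hposd).1 h2
    calc 4 * ρ ≤ (m:ℝ) * ((1 - 2 * ρ) * δ0) := h3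
      _ = δ0 * ((1 - 2 * ρ) * (m:ℝ)) := by ring
  have hρ1 : (0:ℝ) < ρ + 1 := by linarith
  obtain ⟨η, hηval⟩ : ∃ a : ℝ, a = δ / (64 * (ρ + 1) * A) := ⟨_, rfl⟩
  have hη0 : 0 < η := by
    rw [hηval]
    exact div_pos hδ (mul_pos (mul_pos (by norm_num) hρ1) hA0)
  obtain ⟨ns, hns0, hhalf⟩ : ∃ ns : ℕ → ℕ,
      ε (ns 0) ≤ η ∧ ∀ i, ε (ns (i + 1)) ≤ ε (ns i) / 2 := by
    have hpickex : ∀ a : ℝ, 0 < a → ∃ n, ε n ≤ a := hsmall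
    let pick : ℝ → ℕ := fun a => if h : 0 < a then (hpickex a h).choose else 0
    have hpick : ∀ a : ℝ, (ha : 0 < a) → ε (pick a) ≤ a := by
      intro a ha
      simp only [pick, dif_pos ha]
      exact (hpickex a ha).choose_spec
    refine ⟨fun i => Nat.rec (pick η) (fun _ prev => pick (ε prev / 2)) i,
      hpick η hη0, fun i => hpick _ (half_pos (hεpos _))⟩
  obtain ⟨T, hTfd, hTnorm0, hTdirac⟩ :=
    exists_op base hNfin hεpos hρ0 hc hrmem hrd hloc hhalf hm1
  obtain ⟨κ, hκval⟩ : ∃ k : ℝ, k = 1 + 4 * ρ / ((1 - 2 * ρ) * (m:ℝ)) := ⟨_, rfl⟩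
  have hTnorm : ‖T‖ ≤ κ := by rw [hκval]; exact hTnorm0
  have hκ1 : 1 ≤ κ := by
    have h4 : 0 ≤ 4 * ρ / ((1 - 2 * ρ) * (m:ℝ)) :=
      div_nonneg (by linarith) (mul_pos hc hmR).le
    rw [hκval]; linarith
  have hκpos : 0 < κ := lt_of_lt_of_le one_pos hκ1
  have hκ2 : κ ≤ 2 := by rw [hκval]; linarith
  have hκm1 : κ - 1 ≤ δ0 := by rw [hκval]; linarith
  refine ⟨κ⁻¹ • T, ?_, ?_, ?_⟩
  · exact range_smul_fd T κ⁻¹ hTfd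
  · exact op_smul_inv_norm_le T hκpos hTnorm
  · intro x hx
    have hxcover := ht hx
    rw [Set.mem_iUnion₂] at hxcover
    obtain ⟨ψ, hψt, hxψ⟩ := hxcover
    rw [Metric.mem_ball, dist_eq_norm (E := FreeSpace K base) x ψ] at hxψ
    obtain ⟨co, hcodef⟩ : ∃ c : K →₀ ℝ, c = cf ψ := ⟨_, rfl⟩
    obtain ⟨σ', hσ'def⟩ : ∃ s : FreeSpace K base,
        s = ∑ y ∈ co.support, co y • diracF K base y := ⟨_, rfl⟩
    have hσ'coe : (σ' : StrongDual ℝ (Lip0 K base))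
        = ∑ y ∈ co.support, co y • dirac K base y := by
      rw [hσ'def, AddSubmonoidClass.coe_finset_sum]
      apply Finset.sum_congr rfl
      intro y _
      rfl
    have hψσ : ‖ψ - σ'‖ < δ' := by
      rw [Submodule.coe_norm, Submodule.coe_sub, hσ'coe, hcodef]
      exact hcf ψ
    have hmass : (∑ y ∈ co.support, |co y|) ≤ A := by
      have h1 : (∑ y ∈ co.support, |co y|) ≤ ∑ φ ∈ t, ∑ y ∈ (cf φ).support, |cf φ y| := by
        rw [hcodef]
        exact Finset.single_le_sum (f := fun φ => ∑ y ∈ (cf φ).support, |cf φ y|)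
          (fun φ _ => Finset.sum_nonneg fun y _ => abs_nonneg _) hψt
      rw [hAval]; linarith
    have hτ0 : (0:ℝ) ≤ 2 * ρ * ε (ns 0) :=
      mul_nonneg (mul_nonneg (by norm_num) hρ0) (hεpos _).le
    have hτA : A * (2 * ρ * ε (ns 0)) ≤ δ' := by
      have h1 : A * (2 * ρ * ε (ns 0)) ≤ A * (2 * ρ * η) := by
        apply mul_le_mul_of_nonneg_left _ hA0.le
        apply mul_le_mul_of_nonneg_left hns0 (by linarith)
      have h2 : A * (2 * ρ * η) ≤ δ' := by
        rw [hηval, hδ'val]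
        have hAne : A ≠ 0 := hA0.ne'
        have hρ1ne : ρ + 1 ≠ 0 := hρ1.ne'
        rw [show A * (2 * ρ * (δ / (64 * (ρ + 1) * A))) = δ * ρ / (32 * (ρ + 1)) from by
          field_simp
          ring]
        rw [div_le_div_iff₀ (by nlinarith) (by norm_num)]
        nlinarith
      linarith
    have hTσ'2 : ‖T σ' - σ'‖ ≤ δ' := by
      rw [hσ'def]
      calc ‖T (∑ y ∈ co.support, co y • diracF K base y)
            - ∑ y ∈ co.support, co y • diracF K base y‖
          ≤ (∑ y ∈ co.support, |co y|) * (2 * ρ * ε (ns 0)) :=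
            sum_approx_est T co.support (fun y => co y) (fun y => diracF K base y)
              hτ0 (fun y _ => hTdirac y)
        _ ≤ A * (2 * ρ * ε (ns 0)) := mul_le_mul_of_nonneg_right hmass hτ0
        _ ≤ δ' := hτA
    have hxR : ‖x‖ ≤ R := hRb x hx
    have hup := pointwise_upgrade T hκ1 hκ2 hTnorm hxψ.le hψσ.le hTσ'2 hxR
    have hb2 : (κ - 1) * R ≤ δ / 8 := by
      have h1 : (κ - 1) * R ≤ (δ / (8 * (R + 1))) * R :=
        mul_le_mul_of_nonneg_right (le_trans hκm1 hδ0R) hR0.le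
      calc (κ - 1) * R ≤ (δ / (8 * (R + 1))) * R := h1
        _ ≤ δ / 8 := by
            rw [div_mul_eq_mul_div, div_le_div_iff₀ (by nlinarith) (by norm_num)]
            nlinarith
    calc ‖(κ⁻¹ • T) x - x‖ ≤ 7 * δ' + (κ - 1) * R := hup
      _ < δ := by
          have h7 : δ' = δ / 32 := hδ'val
          linarith


end
end

section
/- Let K be a compact metric space, let ε > 0, let ρ < 1/2, and let N be a finite subset of K which is ε-separated and ρε-dense in K. Then there exists a retraction P : K → N (a map with P(x) = x for all x ∈ N) which is λ-Lipschitz with λ = (1 − 2ρ)^{-1}. -/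
open Filter Topology Metric Set

noncomputable section

/-- If `N` is a finite `ε`-separated and `ρε`-dense subset of a compact
metric space `K`, with `ρ < 1/2`, then there is a retraction `P : K → N` which is
`λ`-Lipschitz with `λ = (1 - 2ρ)⁻¹`. -/
theorem free_spaces_stmt14 {K : Type*} [MetricSpace K] [CompactSpace K]
    (ε : ℝ) (hε : 0 < ε) (ρ : ℝ) (hρ : ρ < 1/2)
    (N : Set K) (hNfin : N.Finite)
    (hsep : ∀ x ∈ N, ∀ y ∈ N, x ≠ y → ε ≤ dist x y)
    (hdense : ∀ z : K, ∃ y ∈ N, dist z y ≤ ρ * ε) :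
    ∃ P : K → K, (∀ z : K, P z ∈ N) ∧ (∀ x ∈ N, P x = x) ∧
      ∀ z w : K, dist (P z) (P w) ≤ (1 - 2 * ρ)⁻¹ * dist z w := by
  classical
  by_cases hK : Nonempty K
  · -- ρ * ε ≥ 0, hence ρ ≥ 0
    obtain ⟨z₀⟩ := hK
    obtain ⟨y₀, _, hy₀⟩ := hdense z₀
    have hρε : 0 ≤ ρ * ε := le_trans dist_nonneg hy₀
    have hρ0 : 0 ≤ ρ := nonneg_of_mul_nonneg_right (by linarith : (0:ℝ) ≤ ε * ρ) hε
    have h12 : 0 < 1 - 2 * ρ := by linarith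
    set P : K → K := fun z => if h : z ∈ N then z else (hdense z).choose with hP
    have hPmem : ∀ z, P z ∈ N := by
      intro z
      by_cases h : z ∈ N
      · simp [hP, h]
      · simpa [hP, h] using (hdense z).choose_spec.1
    have hPdist : ∀ z, dist z (P z) ≤ ρ * ε := by
      intro z
      by_cases h : z ∈ N
      · simpa [hP, h] using hρε
      · simpa [hP, h] using (hdense z).choose_spec.2
    refine ⟨P, hPmem, fun x hx => by simp [hP, hx], fun z w => ?_⟩
    by_cases heq : P z = P w
    · rw [heq]
      simp only [dist_self]
      positivity
    · have hsep' : ε ≤ dist (P z) (P w) := hsep _ (hPmem z) _ (hPmem w) heq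
      have htri : dist (P z) (P w) ≤ dist z w + 2 * (ρ * ε) := by
        have h1 := hPdist z
        have h2 := hPdist w
        have := dist_triangle4 (P z) z w (P w)
        rw [dist_comm (P z) z] at this
        linarith [dist_triangle4 (P z) z w (P w)]
      have : dist (P z) (P w) ≤ dist z w + 2 * ρ * dist (P z) (P w) := by
        nlinarith
      rw [inv_mul_eq_div, le_div_iff₀ h12]
      linarith
  · exact ⟨id, fun z => absurd ⟨z⟩ hK, fun x hx => rfl, fun z => absurd ⟨z⟩ hK⟩


end
end
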